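/- arXiv:1204.4743 — 6 statements merged into one kernel-verified Lean document; each statement's English description precedes it below -/
import Mathlib

section
/- For all ordinals ζ ≤ ξ, one has −ζ + ξ = −CNP(ζ, ξ) + ξ; that is, subtracting ζ from ξ on the left gives the same result as subtracting the largest partial sum of the Cantor normal form of ξ that does not exceed ζ. -/
open Ordinal

/-- `CNA ξ` is the set of partial sums of the Cantor normal form of `ξ`:
if `ξ = ω^{ξ_1} + … + ω^{ξ_N}` with `ξ_1 ≥ … ≥ ξ_N`, then `CNA ξ` consists of
the sums `ω^{ξ_1} + … + ω^{ξ_k}` for `0 ≤ k ≤ N` (including the empty sum `0`).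
Since the weakly decreasing representation is unique, we may describe this as:
`η ∈ CNA ξ` iff there are lists of exponents `l₁, l₂` with `l₁ ++ l₂` weakly
decreasing, `ξ` the sum of the `ω`-powers of `l₁ ++ l₂`, and `η` that of `l₁`. -/
def CNA (ξ : Ordinal) : Set Ordinal :=
  { η | ∃ l₁ l₂ : List Ordinal, (l₁ ++ l₂).Chain' (· ≥ ·) ∧
      ξ = ((l₁ ++ l₂).map fun e => ω ^ e).sum ∧
      η = (l₁.map fun e => ω ^ e).sum }

/-- `CNP ζ ξ` is the Cantor normal form projection of `ζ` on `ξ`: the largest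
element of `CNA ξ` that does not exceed `ζ`. -/
noncomputable def CNP (ζ ξ : Ordinal) : Ordinal :=
  sSup { η | η ∈ CNA ξ ∧ η ≤ ζ }

private lemma wsum_lt {a : Ordinal} : ∀ l : List Ordinal, (∀ x ∈ l, x ≤ a) →
    ((l.map fun e => ω ^ e).sum) < ω ^ Order.succ a
  | [], _ => by simpa using opow_pos (Order.succ a) omega0_pos
  | x :: t, h => by
      simp only [List.map_cons, List.sum_cons]
      exact principal_add_omega0_opow _
        ((opow_lt_opow_iff_right one_lt_omega0).2
          ((h x (by simp)).trans_lt (Order.lt_succ a)))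
        (wsum_lt t fun y hy => h y (by simp [hy]))

private lemma head_log {x : Ordinal} {t : List Ordinal} (hc : (x :: t).Chain' (· ≥ ·))
    {ξ : Ordinal} (hs : ξ = ((x :: t).map fun e => ω ^ e).sum) :
    log ω ξ = x ∧ ω ^ x ≤ ξ ∧ ξ ≠ 0 := by
  have hall : ∀ y ∈ x :: t, y ≤ x := by
    have hp := List.isChain_iff_pairwise.1 hc
    intro y hy
    rcases List.mem_cons.1 hy with rfl | hy
    · exact le_rfl
    · exact List.rel_of_pairwise_cons hp hy
  have hle : ω ^ x ≤ ξ := by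
    rw [hs]; simp only [List.map_cons, List.sum_cons]; exact le_self_add
  have hne : ξ ≠ 0 := ((opow_pos x omega0_pos).trans_le hle).ne'
  have hlt : ξ < ω ^ Order.succ x := hs ▸ wsum_lt _ hall
  refine ⟨le_antisymm ?_ ?_, hle, hne⟩
  · exact Order.lt_succ_iff.1 ((lt_opow_iff_log_lt one_lt_omega0 hne).1 hlt)
  · exact (opow_le_iff_le_log one_lt_omega0 hne).1 hle

private lemma sub_log_lt {ξ : Ordinal} (hξ : ξ ≠ 0) : ξ - ω ^ log ω ξ < ξ := by
  set e := log ω ξ with he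
  have hωe : ω ^ e ≤ ξ := opow_log_le_self ω hξ
  rcases lt_or_ge (ξ - ω ^ e) ξ with h | h
  · exact h
  exfalso
  have hsub : ξ - ω ^ e = ξ :=
    le_antisymm (Ordinal.sub_le.2 (le_add_self)) h
  have heq : ω ^ e + ξ = ξ := by
    conv_rhs => rw [← Ordinal.add_sub_cancel_of_le hωe, hsub]
  have habs : ∀ n : ℕ, ω ^ e * n + ξ = ξ := by
    intro n
    induction n with
    | zero => simp
    | succ n ih =>
        rw [Nat.cast_succ, mul_add, mul_one, add_assoc, heq, ih]
  obtain ⟨n, hn⟩ := lt_omega0_opow_succ.1 (lt_opow_succ_log_self one_lt_omega0 ξ)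
  exact absurd ((le_self_add (a := ω ^ e * n) (b := ξ)).trans_eq (habs n)) (not_le.2 hn)

private lemma exists_rep (ξ : Ordinal) : ∃ l : List Ordinal,
    l.Chain' (· ≥ ·) ∧ ξ = (l.map fun e => ω ^ e).sum := by
  induction ξ using Ordinal.induction with
  | h ξ IH =>
  rcases eq_or_ne ξ 0 with rfl | hξ
  · exact ⟨[], List.isChain_nil, by simp⟩
  · have hωe : ω ^ log ω ξ ≤ ξ := opow_log_le_self ω hξ
    have hlt : ξ < ω ^ Order.succ (log ω ξ) := lt_opow_succ_log_self one_lt_omega0 ξ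
    obtain ⟨l, hl, hsum⟩ := IH _ (sub_log_lt hξ)
    refine ⟨log ω ξ :: l, ?_, ?_⟩
    · cases l with
      | nil => exact List.isChain_singleton _
      | cons a t =>
        refine List.isChain_cons_cons.2 ⟨?_, hl⟩
        have h1 : ω ^ a ≤ ξ :=
          ((head_log hl hsum).2.1).trans (Ordinal.sub_le.2 (le_add_self))
        exact Order.lt_succ_iff.1
          ((opow_lt_opow_iff_right one_lt_omega0).1 (h1.trans_lt hlt))
    · simp only [List.map_cons, List.sum_cons, ← hsum]
      exact (Ordinal.add_sub_cancel_of_le hωe).symm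

private lemma mem_step {ξ η : Ordinal} (hξ : ξ ≠ 0) (hη : η ∈ CNA ξ) (hη0 : η ≠ 0) :
    ∃ η' ∈ CNA (ξ - ω ^ log ω ξ), η = ω ^ log ω ξ + η' := by
  obtain ⟨l₁, l₂, hc, hs, hval⟩ := hη
  cases l₁ with
  | nil => exact absurd (by simpa using hval) hη0
  | cons a t =>
    rw [List.cons_append] at hc hs
    have hh := head_log hc hs
    refine ⟨(t.map fun e => ω ^ e).sum, ⟨t, l₂, hc.tail, ?_, rfl⟩, ?_⟩
    · rw [hh.1]
      refine Ordinal.sub_eq_of_add_eq ?_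
      rw [hs, List.map_cons, List.sum_cons]
    · rw [hval, List.map_cons, List.sum_cons, hh.1]

private lemma step_mem {ξ η' : Ordinal} (hξ : ξ ≠ 0) (hη' : η' ∈ CNA (ξ - ω ^ log ω ξ)) :
    ω ^ log ω ξ + η' ∈ CNA ξ := by
  obtain ⟨l₁, l₂, hc, hs, hval⟩ := hη'
  refine ⟨log ω ξ :: l₁, l₂, ?_, ?_, ?_⟩
  · rw [List.cons_append]
    cases hll : l₁ ++ l₂ with
    | nil => exact List.isChain_singleton _
    | cons a t =>
      rw [hll] at hc hs
      refine List.isChain_cons_cons.2 ⟨?_, hc⟩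
      have h1 : ω ^ a ≤ ξ :=
        ((head_log hc hs).2.1).trans (Ordinal.sub_le.2 (le_add_self))
      exact Order.lt_succ_iff.1 ((opow_lt_opow_iff_right one_lt_omega0).1
        (h1.trans_lt (lt_opow_succ_log_self one_lt_omega0 ξ)))
  · rw [List.cons_append, List.map_cons, List.sum_cons, ← hs]
    exact (Ordinal.add_sub_cancel_of_le (opow_log_le_self ω hξ)).symm
  · rw [List.map_cons, List.sum_cons, hval]

private lemma key : ∀ ξ ζ : Ordinal, ζ ≤ ξ → ∃ η,
    IsGreatest { η | η ∈ CNA ξ ∧ η ≤ ζ } η ∧ ξ - ζ = ξ - η := by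
  intro ξ
  induction ξ using Ordinal.induction with
  | h ξ IH =>
  intro ζ hζ
  rcases eq_or_ne ξ 0 with rfl | hξ0
  · obtain rfl : ζ = 0 := nonpos_iff_eq_zero.1 hζ
    refine ⟨0, ⟨⟨⟨[], [], List.isChain_nil, by simp, by simp⟩, le_rfl⟩, ?_⟩, rfl⟩
    rintro η ⟨-, hη⟩
    exact hη
  · have hωe : ω ^ log ω ξ ≤ ξ := opow_log_le_self ω hξ0
    have hdec : ω ^ log ω ξ + (ξ - ω ^ log ω ξ) = ξ :=
      Ordinal.add_sub_cancel_of_le hωe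
    rcases lt_or_ge ζ (ω ^ log ω ξ) with hlt | hge
    · refine ⟨0, ⟨⟨?_, zero_le (a := ζ)⟩, ?_⟩, ?_⟩
      · obtain ⟨l, hl, hs⟩ := exists_rep ξ
        exact ⟨[], l, by simpa using hl, by simpa using hs, by simp⟩
      · rintro η ⟨hη, hηζ⟩
        by_contra hne
        obtain ⟨η', -, rfl⟩ :=
          mem_step hξ0 hη (fun h => hne (h ▸ le_rfl))
        exact absurd hηζ (not_le.2 (hlt.trans_le le_self_add))
      · rw [Ordinal.sub_zero]
        have habs : ζ + ξ = ξ := add_absorp hlt hωe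
        calc ξ - ζ = ζ + ξ - ζ := by rw [habs]
          _ = ξ := Ordinal.add_sub_cancel ζ ξ
    · obtain ⟨δ, rfl⟩ : ∃ δ, ζ = ω ^ log ω ξ + δ :=
        ⟨ζ - ω ^ log ω ξ, (Ordinal.add_sub_cancel_of_le hge).symm⟩
      have hδ : δ ≤ ξ - ω ^ log ω ξ := (Ordinal.le_sub_of_le hωe).2 hζ
      obtain ⟨η', ⟨⟨hmem', hle'⟩, hub'⟩, heq'⟩ :=
        IH _ (sub_log_lt hξ0) δ hδ
      refine ⟨ω ^ log ω ξ + η', ⟨⟨step_mem hξ0 hmem', add_le_add_right hle' _⟩, ?_⟩, ?_⟩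
      · rintro η ⟨hη, hηζ⟩
        rcases eq_or_ne η 0 with rfl | hη0
        · exact zero_le
        obtain ⟨η₁, hη₁, rfl⟩ := mem_step hξ0 hη hη0
        exact add_le_add_right (hub' ⟨hη₁, le_of_add_le_add_left hηζ⟩) _
      · have hη'le : η' ≤ ξ - ω ^ log ω ξ := hle'.trans hδ
        have h1 : ω ^ log ω ξ + δ + (ξ - ω ^ log ω ξ - δ) = ξ := by
          rw [add_assoc, Ordinal.add_sub_cancel_of_le hδ, hdec]
        have h2 : ω ^ log ω ξ + η' + (ξ - ω ^ log ω ξ - η') = ξ := by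
          rw [add_assoc, Ordinal.add_sub_cancel_of_le hη'le, hdec]
        rw [Ordinal.sub_eq_of_add_eq h1, Ordinal.sub_eq_of_add_eq h2, heq']

/-- For ordinals `ζ ≤ ξ`: `−ζ + ξ = −CNP(ζ,ξ) + ξ` (left subtraction `ξ - ζ`). -/
theorem stmt7 (ζ ξ : Ordinal) (h : ζ ≤ ξ) :
    ξ - ζ = ξ - CNP ζ ξ := by
  obtain ⟨η, hg, heq⟩ := key ξ ζ h
  rw [CNP, hg.csSup_eq]
  exact heq
end

section
/- For all ordinals ζ ≤ ξ there exists a unique η ∈ CNA(ξ) such that −ζ + ξ = −η + ξ. -/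
open Ordinal

/-- The sum of the `ω`-powers of a list of exponents. -/
noncomputable def osum (l : List Ordinal) : Ordinal := (l.map fun e => ω ^ e).sum

theorem osum_nil : osum [] = 0 := rfl

theorem osum_cons (e : Ordinal) (l : List Ordinal) : osum (e :: l) = ω ^ e + osum l := by
  simp [osum]

theorem osum_append (l m : List Ordinal) : osum (l ++ m) = osum l + osum m := by
  simp [osum]

/-- Each `ω`-power term is at most the total sum. -/
theorem le_osum_of_mem {l : List Ordinal} {f : Ordinal} (hf : f ∈ l) : ω ^ f ≤ osum l := by
  induction l with
  | nil => simp at hf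
  | cons e l ih =>
    rw [osum_cons]
    rcases List.mem_cons.1 hf with rfl | hf
    · exact le_self_add
    · exact (ih hf).trans le_add_self

/-- A weakly decreasing list of exponents bounded by `a` has sum `< ω ^ (a + 1)`. -/
theorem osum_lt_opow {l : List Ordinal} (hp : l.Pairwise (· ≥ ·)) {a : Ordinal}
    (ha : ∀ f ∈ l, f ≤ a) : osum l < ω ^ (a + 1) := by
  induction l generalizing a with
  | nil => exact Ordinal.opow_pos _ omega0_pos
  | cons e l ih =>
    rw [osum_cons]
    obtain ⟨he, hp'⟩ := List.pairwise_cons.1 hp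
    have h1 : osum l < ω ^ (e + 1) := ih hp' fun f hf => he f hf
    have h2 : ω ^ e < ω ^ (e + 1) :=
      (Ordinal.opow_lt_opow_iff_right one_lt_omega0).2 (lt_add_one e)
    have h3 : ω ^ e + osum l < ω ^ (e + 1) :=
      Ordinal.principal_add_omega0_opow (e + 1) h2 h1
    exact h3.trans_le <| Ordinal.opow_le_opow_right omega0_pos
      (add_le_add_left (ha e (List.mem_cons_self (a := e) (l := l))) 1)

/-- Uniqueness of the weakly decreasing representation. -/
theorem osum_inj : ∀ (l m : List Ordinal), l.Pairwise (· ≥ ·) → m.Pairwise (· ≥ ·) →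
    osum l = osum m → l = m := by
  intro l
  induction l with
  | nil =>
    intro m _ _ hs
    cases m with
    | nil => rfl
    | cons f m' =>
      exact absurd (le_osum_of_mem (List.mem_cons_self (a := f) (l := m'))) <| by
        rw [← hs, osum_nil] ; exact not_le.2 (Ordinal.opow_pos _ omega0_pos)
  | cons e l ih =>
    intro m hpl hpm hs
    cases m with
    | nil =>
      exact absurd (le_osum_of_mem (List.mem_cons_self (a := e) (l := l))) <| by
        rw [hs, osum_nil] ; exact not_le.2 (Ordinal.opow_pos _ omega0_pos)
    | cons f m' =>
      have hbound : ∀ (g : Ordinal) (n : List Ordinal), (g :: n).Pairwise (· ≥ ·) →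
          osum (g :: n) < ω ^ (g + 1) := by
        intro g n hpn
        refine osum_lt_opow hpn fun x hx => ?_
        rcases List.mem_cons.1 hx with rfl | hx
        · exact le_rfl
        · exact (List.pairwise_cons.1 hpn).1 x hx
      have hef : e = f := by
        by_contra hne
        rcases lt_or_gt_of_ne hne with hlt | hlt
        · have : osum (e :: l) < osum (f :: m') :=
            (hbound e l hpl).trans_le <| ((Ordinal.opow_le_opow_right omega0_pos
              (Order.add_one_le_of_lt hlt)).trans (le_osum_of_mem (List.mem_cons_self (a := f) (l := m'))))
          exact absurd hs this.ne
        · have : osum (f :: m') < osum (e :: l) :=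
            (hbound f m' hpm).trans_le <| ((Ordinal.opow_le_opow_right omega0_pos
              (Order.add_one_le_of_lt hlt)).trans (le_osum_of_mem (List.mem_cons_self (a := e) (l := l))))
          exact absurd hs this.ne'
      subst hef
      have hs' : osum l = osum m' := by
        rw [osum_cons, osum_cons] at hs
        exact add_left_cancel hs
      rw [ih m' (List.pairwise_cons.1 hpl).2 (List.pairwise_cons.1 hpm).2 hs']

/-- If `ξ < ω ^ (e + 1)` then `ξ < ω ^ e + ξ`. -/
theorem lt_opow_add_self {ξ e : Ordinal} (h : ξ < ω ^ (e + 1)) : ξ < ω ^ e + ξ := by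
  by_contra hle
  push_neg at hle
  have habs : ω ^ e + ξ = ξ := le_antisymm hle le_add_self
  have hn : ∀ n : ℕ, ω ^ e * n + ξ = ξ := by
    intro n
    induction n with
    | zero => simp
    | succ n ihn =>
      push_cast
      rw [mul_add, mul_one, add_assoc, habs, ihn]
  have hω : ω ^ e * ω ≤ ξ := by
    rw [Ordinal.mul_le_iff_of_isSuccLimit Ordinal.isSuccLimit_omega0]
    intro b hb
    obtain ⟨n, rfl⟩ := Ordinal.lt_omega0.1 hb
    calc ω ^ e * n ≤ ω ^ e * n + ξ := le_self_add
    _ = ξ := hn n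
  rw [← Ordinal.opow_succ, ← Ordinal.add_one_eq_succ] at hω
  exact absurd hω (not_le.2 h)

/-- Existence of the decomposition. -/
theorem exists_decomp : ∀ ξ ζ : Ordinal, ζ ≤ ξ → ∃ l₁ l₂ : List Ordinal,
    (l₁ ++ l₂).Pairwise (· ≥ ·) ∧ osum l₁ + osum l₂ = ξ ∧ osum l₁ ≤ ζ ∧ ζ + osum l₂ = ξ := by
  refine fun ξ => Ordinal.induction
    (p := fun ξ => ∀ ζ : Ordinal, ζ ≤ ξ → ∃ l₁ l₂ : List Ordinal,
      (l₁ ++ l₂).Pairwise (· ≥ ·) ∧ osum l₁ + osum l₂ = ξ ∧ osum l₁ ≤ ζ ∧ ζ + osum l₂ = ξ)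
    ξ (fun ξ IH ζ hζ => ?_)
  rcases eq_or_ne ξ 0 with rfl | hξ
  · exact ⟨[], [], List.Pairwise.nil, by rw [osum_nil, zero_add], zero_le,
      by rw [nonpos_iff_eq_zero.1 hζ, osum_nil, zero_add]⟩
  set e := log ω ξ with he
  have h1 : ω ^ e ≤ ξ := Ordinal.opow_log_le_self ω hξ
  have h2 : ξ < ω ^ (e + 1) := by
    rw [Ordinal.add_one_eq_succ]
    exact Ordinal.lt_opow_succ_log_self one_lt_omega0 ξ
  have hlt : ξ - ω ^ e < ξ := (Ordinal.sub_lt_of_le h1).2 (lt_opow_add_self h2)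
  have hsum : ω ^ e + (ξ - ω ^ e) = ξ := Ordinal.add_sub_cancel_of_le h1
  -- bound on exponents appearing in decompositions of `ξ - ω ^ e`
  have hbd : ∀ l₁ l₂ : List Ordinal, osum l₁ + osum l₂ = ξ - ω ^ e →
      ∀ f ∈ l₁ ++ l₂, f ≤ e := by
    intro l₁ l₂ hs f hf
    have : ω ^ f ≤ ξ - ω ^ e := by
      rw [← hs, ← osum_append]
      exact le_osum_of_mem hf
    have : ω ^ f < ω ^ (e + 1) :=
      this.trans_lt <| (Ordinal.sub_le_self _ _).trans_lt h2
    have := (Ordinal.opow_lt_opow_iff_right one_lt_omega0).1 this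
    exact Order.le_of_lt_add_one this
  rcases lt_or_ge ζ (ω ^ e) with hc | hc
  · -- ζ is absorbed; take η = 0
    obtain ⟨l₁, l₂, hp, hs, -, -⟩ := IH _ hlt 0 (zero_le)
    refine ⟨[], e :: (l₁ ++ l₂), ?_, ?_, zero_le, ?_⟩
    · rw [List.nil_append, List.pairwise_cons]
      exact ⟨hbd l₁ l₂ hs, hp⟩
    · rw [osum_nil, zero_add, osum_cons, osum_append, hs, hsum]
    · rw [osum_cons, osum_append, hs, hsum]
      exact Ordinal.add_absorp hc h1
  · -- peel off ω ^ e
    have hζ' : ζ - ω ^ e ≤ ξ - ω ^ e := by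
      rw [Ordinal.sub_le, hsum]; exact hζ
    obtain ⟨l₁, l₂, hp, hs, hle, habs⟩ := IH _ hlt (ζ - ω ^ e) hζ'
    refine ⟨e :: l₁, l₂, ?_, ?_, ?_, ?_⟩
    · rw [List.cons_append, List.pairwise_cons]
      exact ⟨hbd l₁ l₂ hs, hp⟩
    · rw [osum_cons, add_assoc, hs, hsum]
    · rw [osum_cons]
      calc ω ^ e + osum l₁ ≤ ω ^ e + (ζ - ω ^ e) := add_le_add_right hle _
      _ = ζ := Ordinal.add_sub_cancel_of_le hc
    · calc ζ + osum l₂ = ω ^ e + (ζ - ω ^ e) + osum l₂ := by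
            rw [Ordinal.add_sub_cancel_of_le hc]
      _ = ω ^ e + (ξ - ω ^ e) := by rw [add_assoc, habs]
      _ = ξ := hsum

/-- For ordinals `ζ ≤ ξ` there is a unique `η ∈ CNA ξ` with `−ζ + ξ = −η + ξ`. -/
theorem stmt8 (ζ ξ : Ordinal) (h : ζ ≤ ξ) :
    ∃! η : Ordinal, η ∈ CNA ξ ∧ ξ - ζ = ξ - η := by
  obtain ⟨l₁, l₂, hp, hs, hle, habs⟩ := exists_decomp ξ ζ h
  have hsub₁ : ξ - osum l₁ = osum l₂ := by rw [← hs, Ordinal.add_sub_cancel]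
  have hsubζ : ξ - ζ = osum l₂ := by rw [← habs, Ordinal.add_sub_cancel]
  refine ⟨osum l₁, ⟨⟨l₁, l₂, List.isChain_iff_pairwise.2 hp, ?_, rfl⟩, ?_⟩, ?_⟩
  · show ξ = osum (l₁ ++ l₂)
    rw [osum_append, hs]
  · rw [hsubζ, hsub₁]
  · rintro y ⟨⟨m₁, m₂, hc', hs', rfl⟩, hsub'⟩
    have hpm : (m₁ ++ m₂).Pairwise (· ≥ ·) := List.isChain_iff_pairwise.1 hc'
    have hs'' : osum m₁ + osum m₂ = ξ := by rw [← osum_append]; exact hs'.symm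
    have hsub₂ : ξ - osum m₁ = osum m₂ := by rw [← hs'', Ordinal.add_sub_cancel]
    -- the two full lists are equal
    have hfull : l₁ ++ l₂ = m₁ ++ m₂ := by
      refine osum_inj _ _ hp hpm ?_
      rw [osum_append, osum_append, hs, hs'']
    -- the tails have equal sums, hence are equal
    have htails : l₂ = m₂ := by
      refine osum_inj _ _ (hp.sublist (List.sublist_append_right _ _))
        (hpm.sublist (List.sublist_append_right _ _)) ?_
      rw [← hsub₂, ← hsubζ]
      exact hsub'
    have : l₁ = m₁ := List.append_cancel_right (htails ▸ hfull)
    rw [this]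
    rfl
end

section
/- For all ordinals ξ, ζ, η with ξ ≤ η and ζ ≤ η, one has −ξ + η = −ζ + η if and only if CNP(ξ, η) = CNP(ζ, η). -/
open Ordinal

noncomputable def PS (l : List Ordinal) : Ordinal := (l.map fun e => ω ^ e).sum

lemma PS_nil : PS [] = 0 := rfl
lemma PS_cons (e : Ordinal) (l : List Ordinal) : PS (e :: l) = ω ^ e + PS l := rfl
lemma PS_append (l₁ l₂ : List Ordinal) : PS (l₁ ++ l₂) = PS l₁ + PS l₂ := by
  simp [PS]

lemma le_of_opow_le {f e η : Ordinal} (h1 : ω ^ f ≤ η) (h2 : η < ω ^ (e+1)) : f ≤ e := by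
  have := (opow_lt_opow_iff_right one_lt_omega0).1 (lt_of_le_of_lt h1 h2)
  rwa [Ordinal.add_one_eq_succ, Order.lt_succ_iff] at this

lemma PS_lt {e : Ordinal} {l : List Ordinal} (h : ∀ f ∈ l, f ≤ e) : PS l < ω ^ (e+1) := by
  induction l with
  | nil => rw [PS_nil]; exact opow_pos _ omega0_pos
  | cons f t ih =>
    rw [PS_cons]
    refine principal_add_omega0_opow _ ?_ (ih fun g hg => h g (List.mem_cons_of_mem _ hg))
    have hf : f ≤ e := h f (List.mem_cons_self)
    apply (opow_lt_opow_iff_right one_lt_omega0).2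
    rw [Ordinal.add_one_eq_succ, Order.lt_succ_iff]; exact hf

lemma lt_opow_add {x f : Ordinal} (h : x < ω ^ (f+1)) : x < ω ^ f + x := by
  have hf : (ω : Ordinal) ^ f ≠ 0 := (opow_pos f omega0_pos).ne'
  have hq : x / ω ^ f < ω := by
    rw [Ordinal.div_lt hf, ← opow_succ, ← Ordinal.add_one_eq_succ]
    exact h
  obtain ⟨n, hn⟩ := lt_omega0.1 hq
  have key : (1 : Ordinal) + x / ω ^ f = x / ω ^ f + 1 := by
    rw [hn]; norm_cast; omega
  calc x = ω ^ f * (x / ω ^ f) + x % ω ^ f := (Ordinal.div_add_mod _ _).symm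
    _ < ω ^ f * (x / ω ^ f) + (ω ^ f + x % ω ^ f) := by
        exact add_lt_add_right (lt_of_lt_of_le (Ordinal.mod_lt x hf) (le_self_add)) _
    _ = ω ^ f * (x / ω ^ f) + ω ^ f * 1 + x % ω ^ f := by rw [mul_one, add_assoc]
    _ = ω ^ f * (x / ω ^ f + 1) + x % ω ^ f := by rw [mul_add]
    _ = ω ^ f * (1 + x / ω ^ f) + x % ω ^ f := by rw [key]
    _ = ω ^ f + (ω ^ f * (x / ω ^ f) + x % ω ^ f) := by rw [mul_add, mul_one, add_assoc]
    _ = ω ^ f + x := by rw [Ordinal.div_add_mod]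

lemma exists_rep_s9 (η : Ordinal) :
    ∃ l : List Ordinal, l.Chain' (· ≥ ·) ∧ PS l = η ∧ ∀ f ∈ l, ω ^ f ≤ η := by
  induction η using Ordinal.induction with
  | h η IH =>
    rcases eq_or_ne η 0 with rfl | h0
    · exact ⟨[], List.isChain_nil, PS_nil, by simp⟩
    · set e := log ω η with he
      have h1 : ω ^ e ≤ η := opow_log_le_self ω h0
      have h2 : η < ω ^ (e+1) := by
        rw [Ordinal.add_one_eq_succ]; exact lt_opow_succ_log_self one_lt_omega0 η
      set ρ := η - ω ^ e with hρ
      have hρη : ω ^ e + ρ = η := Ordinal.add_sub_cancel_of_le h1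
      have hρle : ρ ≤ η := (Ordinal.sub_le_self _ _)
      have hρlt : ρ < η := by
        have := lt_opow_add (lt_of_le_of_lt hρle h2)
        rwa [hρη] at this
      obtain ⟨l, hc, hs, hb⟩ := IH ρ hρlt
      refine ⟨e :: l, ?_, by rw [PS_cons, hs, hρη], ?_⟩
      · refine List.isChain_cons.2 ⟨?_, hc⟩
        intro f hf
        have hfl : f ∈ l := List.mem_of_mem_head? hf
        exact le_of_opow_le ((hb f hfl).trans hρle) h2
      · intro f hf
        rcases List.mem_cons.1 hf with rfl | hf
        · exact h1
        · exact (hb f hf).trans hρle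

lemma PS_pos {e : Ordinal} {t : List Ordinal} : 0 < PS (e :: t) := by
  rw [PS_cons]
  exact lt_of_lt_of_le (opow_pos e omega0_pos) le_self_add

lemma PS_head_lt {f : Ordinal} {m : List Ordinal} (hcm : (f :: m).Chain' (· ≥ ·)) :
    PS (f :: m) < ω ^ (f + 1) := by
  apply PS_lt
  intro g hg
  rcases List.mem_cons.1 hg with rfl | hg
  · exact le_refl g
  · exact List.rel_of_pairwise_cons (List.isChain_iff_pairwise.1 hcm) hg

lemma PS_inj : ∀ (l l' : List Ordinal), l.Chain' (· ≥ ·) → l'.Chain' (· ≥ ·) →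
    PS l = PS l' → l = l' := by
  intro l
  induction l with
  | nil =>
    intro l' _ hc' h
    cases l' with
    | nil => rfl
    | cons e t =>
      have hp : (0:Ordinal) < PS (e :: t) := PS_pos
      rw [← h, PS_nil] at hp
      exact absurd hp (lt_irrefl 0)
  | cons e t ih =>
    intro l' hc hc' h
    cases l' with
    | nil =>
      have hp : (0:Ordinal) < PS (e :: t) := PS_pos
      rw [h, PS_nil] at hp
      exact absurd hp (lt_irrefl 0)
    | cons e' t' =>
      have hee' : e = e' := by
        have h1 : ω ^ e ≤ PS (e :: t) := by rw [PS_cons]; exact le_self_add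
        have h1' : ω ^ e' ≤ PS (e' :: t') := by rw [PS_cons]; exact le_self_add
        exact le_antisymm (le_of_opow_le (h1.trans (le_of_eq h)) (PS_head_lt hc'))
          (le_of_opow_le (h1'.trans (le_of_eq h.symm)) (PS_head_lt hc))
      subst hee'
      have htt : PS t = PS t' := by
        have h2 : ω ^ e + PS t = ω ^ e + PS t' := by rw [← PS_cons, ← PS_cons]; exact h
        have h3 := congrArg (fun x => x - ω ^ e) h2
        simpa [Ordinal.add_sub_cancel] using h3
      rw [ih t' hc.tail hc'.tail htt]

lemma split : ∀ (l : List Ordinal), l.Chain' (· ≥ ·) → ∀ ξ : Ordinal, ξ ≤ PS l →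
    ∃ k, k ≤ l.length ∧ PS (l.take k) ≤ ξ ∧ (k = l.length ∨ ξ < PS (l.take (k+1))) := by
  intro l
  induction l with
  | nil =>
    intro _ ξ hξ
    exact ⟨0, le_refl _, by rw [List.take_nil, PS_nil]; exact zero_le (a := ξ), Or.inl rfl⟩
  | cons e t ih =>
    intro hc ξ hξ
    by_cases hce : ξ < ω ^ e
    · refine ⟨0, Nat.zero_le _, by rw [List.take_zero, PS_nil]; exact zero_le (a := ξ), Or.inr ?_⟩
      simpa [List.take_succ_cons, PS_cons, PS_nil] using hce
    · push_neg at hce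
      set δ := ξ - ω ^ e with hδdef
      have hδ : ω ^ e + δ = ξ := Ordinal.add_sub_cancel_of_le hce
      have hδt : δ ≤ PS t := by
        rw [hδdef, Ordinal.sub_le]
        rw [PS_cons] at hξ
        exact hξ
      obtain ⟨k, hk, h1, h2⟩ := ih hc.tail δ hδt
      refine ⟨k+1, by simp; omega, ?_, ?_⟩
      · rw [List.take_succ_cons, PS_cons, ← hδ]
        exact add_le_add_right h1 _
      · rcases h2 with h2 | h2
        · left; simp [h2]
        · right
          rw [List.take_succ_cons, PS_cons, ← hδ]
          exact add_lt_add_right h2 _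

lemma PS_take_succ {l : List Ordinal} {k : ℕ} (hk : k < l.length) :
    PS (l.take (k+1)) = PS (l.take k) + ω ^ l[k] := by
  rw [List.take_succ, List.getElem?_eq_getElem hk]
  rw [PS_append]
  congr 1
  show PS [l[k]] = ω ^ l[k]
  rw [PS_cons, PS_nil, add_zero]

lemma PS_take_mono {l : List Ordinal} {k k' : ℕ} (h : k ≤ k') :
    PS (l.take k) ≤ PS (l.take k') := by
  obtain ⟨m, hm⟩ := (List.take_prefix k (l.take k'))
  rw [List.take_take, min_eq_left h] at hm
  rw [← hm, PS_append]
  exact le_self_add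

lemma PS_take_strict {l : List Ordinal} {k k' : ℕ} (h : k < k') (h' : k < l.length) :
    PS (l.take k) < PS (l.take k') := by
  have h1 : PS (l.take k) < PS (l.take (k+1)) := by
    rw [PS_take_succ h']
    have := add_lt_add_right (opow_pos (l[k]) omega0_pos) (PS (l.take k))
    simpa using this
  exact lt_of_lt_of_le h1 (PS_take_mono h)

lemma PS_take_drop (l : List Ordinal) (k : ℕ) : PS (l.take k) + PS (l.drop k) = PS l := by
  rw [← PS_append, List.take_append_drop]

lemma PS_drop_step {l : List Ordinal} (hc : l.Chain' (· ≥ ·)) {k : ℕ} (hk : k < l.length) :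
    PS (l.drop (k+1)) < PS (l.drop k) := by
  rw [List.drop_eq_getElem_cons hk, PS_cons]
  apply lt_opow_add
  apply PS_lt
  intro f hf
  obtain ⟨i, hi, hfi⟩ := List.mem_iff_getElem.1 hf
  rw [List.getElem_drop] at hfi
  subst hfi
  have hp := List.pairwise_iff_getElem.1 (List.isChain_iff_pairwise.1 hc)
  have hi' : k + 1 + i < l.length := by
    have := hi
    simp only [List.length_drop] at this
    omega
  exact hp k (k+1+i) hk hi' (by omega)

lemma PS_drop_strict {l : List Ordinal} (hc : l.Chain' (· ≥ ·)) {k k' : ℕ}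
    (h : k < k') (h' : k' ≤ l.length) : PS (l.drop k') < PS (l.drop k) := by
  induction k' , h using Nat.le_induction with
  | base => exact PS_drop_step hc (by omega)
  | succ k' hkk' IH =>
    exact lt_trans (PS_drop_step hc (by omega)) (IH (by omega))

lemma key_s9 {η ξ : Ordinal} (hξ : ξ ≤ η) {l : List Ordinal} (hc : l.Chain' (· ≥ ·))
    (hs : PS l = η) :
    ∃ k, k ≤ l.length ∧ CNP ξ η = PS (l.take k) ∧ η - ξ = PS (l.drop k) := by
  obtain ⟨k, hk, h1, h2⟩ := split l hc ξ (hs ▸ hξ)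
  refine ⟨k, hk, ?_, ?_⟩
  · have hg : IsGreatest {π | π ∈ CNA η ∧ π ≤ ξ} (PS (l.take k)) := by
      constructor
      · refine ⟨⟨l.take k, l.drop k, ?_, ?_, rfl⟩, h1⟩
        · rw [List.take_append_drop]; exact hc
        · rw [List.take_append_drop]; exact hs.symm
      · rintro π ⟨⟨m₁, m₂, hmc, hmsum, hmπ⟩, hπξ⟩
        have hml : m₁ ++ m₂ = l := PS_inj _ _ hmc hc (by rw [hs]; exact hmsum.symm)
        set j := m₁.length with hj
        have hm₁ : m₁ = l.take j := by rw [← hml, hj, List.take_left]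
        have hπ : π = PS (l.take j) := by rw [← hm₁]; exact hmπ
        rcases le_or_gt j k with hjk | hjk
        · rw [hπ]; exact PS_take_mono hjk
        · exfalso
          have hjlen : j ≤ l.length := by rw [← hml]; simp [hj]
          have hklen : k ≠ l.length := by omega
          rcases h2 with h2 | h2
          · exact hklen h2
          · have hlt : ξ < PS (l.take j) := lt_of_lt_of_le h2 (PS_take_mono hjk)
            rw [← hπ] at hlt
            exact absurd hπξ (not_le.2 hlt)
    exact hg.csSup_eq
  · rcases h2 with h2 | h2
    · have htk : l.take k = l := by rw [h2]; exact List.take_length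
      have hξη : ξ = η := le_antisymm hξ (by rw [← hs, ← htk]; exact h1)
      rw [hξη, Ordinal.sub_self, h2, List.drop_length, PS_nil]
    · have hklt : k < l.length := by
        rcases Nat.lt_or_ge k l.length with h' | h'
        · exact h'
        · exfalso
          have htk : l.take k = l := List.take_of_length_le h'
          have htk1 : l.take (k+1) = l := List.take_of_length_le (by omega)
          rw [htk1] at h2
          rw [htk] at h1
          rw [hs] at h2 h1
          exact absurd (lt_of_le_of_lt h1 h2) (lt_irrefl η)
      set e := l[k] with he
      have hsucc : PS (l.take (k+1)) = PS (l.take k) + ω ^ e := PS_take_succ hklt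
      have hδlt : ξ - PS (l.take k) < ω ^ e :=
        Ordinal.sub_lt_of_lt_add (by rw [← hsucc]; exact h2) (opow_pos _ omega0_pos)
      have hδ : PS (l.take k) + (ξ - PS (l.take k)) = ξ := Ordinal.add_sub_cancel_of_le h1
      have hdropc : l.drop k = e :: l.drop (k+1) := List.drop_eq_getElem_cons hklt
      have hle : ω ^ e ≤ PS (l.drop k) := by
        rw [hdropc, PS_cons]; exact le_self_add
      have habs : (ξ - PS (l.take k)) + PS (l.drop k) = PS (l.drop k) :=
        Ordinal.add_absorp hδlt hle
      have hηξ : ξ + PS (l.drop k) = η := by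
        rw [← hδ, add_assoc, habs, PS_take_drop, hs]
      rw [← hηξ, Ordinal.add_sub_cancel]

/-- For ordinals `ξ ≤ η` and `ζ ≤ η`: `−ξ + η = −ζ + η` iff
`CNP(ξ,η) = CNP(ζ,η)`. -/
theorem stmt9 (ξ ζ η : Ordinal) (hξ : ξ ≤ η) (hζ : ζ ≤ η) :
    η - ξ = η - ζ ↔ CNP ξ η = CNP ζ η := by
  obtain ⟨l, hc, hs, -⟩ := exists_rep_s9 η
  obtain ⟨k₁, hk₁, hC₁, hD₁⟩ := key_s9 hξ hc hs
  obtain ⟨k₂, hk₂, hC₂, hD₂⟩ := key_s9 hζ hc hs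
  constructor
  · intro h
    rw [hC₁, hC₂]
    have heq : PS (l.drop k₁) = PS (l.drop k₂) := by rw [← hD₁, ← hD₂, h]
    rcases lt_trichotomy k₁ k₂ with hlt | heqk | hgt
    · exact absurd heq (ne_of_gt (PS_drop_strict hc hlt hk₂))
    · rw [heqk]
    · exact absurd heq (ne_of_lt (PS_drop_strict hc hgt hk₁))
  · intro h
    rw [hD₁, hD₂]
    have heq : PS (l.take k₁) = PS (l.take k₂) := by rw [← hC₁, ← hC₂, h]
    rcases lt_trichotomy k₁ k₂ with hlt | heqk | hgt
    · exact absurd heq (ne_of_lt (PS_take_strict hlt (by omega)))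
    · rw [heqk]
    · exact absurd heq (ne_of_gt (PS_take_strict hgt (by omega)))
end

section
/- Let f be a normal ordinal function and let g be the minimal weak hyperation of f. Then for every ordinal α, g(ω^α) equals the α-th function f_α of the Veblen progression based on f. -/
open Ordinal

/-- `g` is a weak hyperation of the normal function `f`: a family of normal
functions with `g 0 = id`, `g 1 = f`, and `g (ξ + ζ) = g ξ ∘ g ζ`. -/
def IsWeakHyperation (f : Ordinal → Ordinal) (g : Ordinal → Ordinal → Ordinal) : Prop :=
  (∀ ξ : Ordinal, Order.IsNormal (g ξ)) ∧
  g 0 = id ∧ g 1 = f ∧ ∀ ξ ζ : Ordinal, g (ξ + ζ) = g ξ ∘ g ζ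

/-- `g` is the hyperation of `f`: the pointwise minimal weak hyperation of `f`. -/
def IsHyperation (f : Ordinal → Ordinal) (g : Ordinal → Ordinal → Ordinal) : Prop :=
  IsWeakHyperation f g ∧
  ∀ h : Ordinal → Ordinal → Ordinal, IsWeakHyperation f h → ∀ ξ ζ : Ordinal, g ξ ζ ≤ h ξ ζ

/-- `V` is the Veblen progression based on `f`: `V 0 = f`, `V (α+1)` is the
derivative of `V α` (the function enumerating the fixed points of `V α`), and
for limit `λ`, `V λ` enumerates the common fixed points of all `V α`, `α < λ`. -/
def IsVeblenProgression (f : Ordinal → Ordinal) (V : Ordinal → Ordinal → Ordinal) : Prop :=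
  V 0 = f ∧
  (∀ α : Ordinal, V (α + 1) = enumOrd {x | V α x = x}) ∧
  (∀ l : Ordinal, Order.IsSuccLimit l → V l = enumOrd {x | ∀ α < l, V α x = x})

namespace Stmt11Aux

set_option linter.unusedVariables false

universe v u

/-- Subtracting the leading `ω`-power strictly decreases a nonzero ordinal. -/
theorem sub_opow_log_lt {ξ : Ordinal.{u}} (h : ξ ≠ 0) : ξ - ω ^ Ordinal.log ω ξ < ξ := by
  set e := Ordinal.log ω ξ with he
  have hle : ω ^ e ≤ ξ := Ordinal.opow_log_le_self ω h
  by_contra hcon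
  push_neg at hcon
  have heq : ξ - ω ^ e = ξ := le_antisymm (Ordinal.sub_le_self _ _) hcon
  have habs : ω ^ e + ξ = ξ := by
    conv_lhs => rw [← heq]
    exact Ordinal.add_sub_cancel_of_le hle
  have hmul : ∀ n : ℕ, ω ^ e * n + ξ = ξ := by
    intro n
    induction n with
    | zero => simp
    | succ n ih =>
        rw [Nat.cast_succ, mul_add_one, add_assoc, habs, ih]
  have hss : ω ^ Order.succ e ≤ ξ := by
    rw [opow_succ]
    refine (Ordinal.mul_le_iff_of_isSuccLimit isSuccLimit_omega0).2 fun b hb => ?_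
    obtain ⟨n, rfl⟩ := Ordinal.lt_omega0.1 hb
    calc ω ^ e * n ≤ ω ^ e * n + ξ := le_self_add
      _ = ξ := hmul n
  exact (Ordinal.lt_opow_succ_log_self one_lt_omega0 ξ).not_ge hss

/-- The candidate weak hyperation built from a family `W` of functions by
composing along the Cantor normal form. -/
noncomputable def Hyp (W : Ordinal.{u} → Ordinal.{v} → Ordinal.{v}) (ξ : Ordinal.{u}) :
    Ordinal.{v} → Ordinal.{v} :=
  if h : ξ = 0 then id
  else W (Ordinal.log ω ξ) ∘ Hyp W (ξ - ω ^ Ordinal.log ω ξ)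
termination_by ξ
decreasing_by exact sub_opow_log_lt h

theorem Hyp_zero (W : Ordinal.{u} → Ordinal.{v} → Ordinal.{v}) : Hyp W 0 = id := by
  rw [Hyp, dif_pos rfl]

theorem Hyp_ne_zero (W : Ordinal.{u} → Ordinal.{v} → Ordinal.{v}) {ξ : Ordinal.{u}}
    (h : ξ ≠ 0) :
    Hyp W ξ = W (Ordinal.log ω ξ) ∘ Hyp W (ξ - ω ^ Ordinal.log ω ξ) := by
  rw [Hyp, dif_neg h]

variable {f : Ordinal.{v} → Ordinal.{v}} {W : Ordinal.{u} → Ordinal.{v} → Ordinal.{v}}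

theorem Hyp_omega_opow_add
    (hWfix : ∀ {α γ : Ordinal.{u}}, α < γ → ∀ x, W α (W γ x) = W γ x)
    (e ζ : Ordinal.{u}) : Hyp W (ω ^ e + ζ) = W e ∘ Hyp W ζ := by
  by_cases hζ : ζ = 0
  · subst hζ
    rw [add_zero, Hyp_ne_zero W (Ordinal.opow_ne_zero e omega0_ne_zero),
      Ordinal.log_opow one_lt_omega0, Ordinal.sub_self]
  · set d := Ordinal.log ω ζ with hd
    by_cases hed : d ≤ e
    · have h1 : ω ^ e + ζ < ω ^ Order.succ e := by
        apply Ordinal.principal_add_omega0_opow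
        · exact (Ordinal.opow_lt_opow_iff_right one_lt_omega0).2 (Order.lt_succ e)
        · exact lt_of_lt_of_le (Ordinal.lt_opow_succ_log_self one_lt_omega0 ζ)
            (Ordinal.opow_le_opow_right omega0_pos (Order.succ_le_succ hed))
      have hne : ω ^ e + ζ ≠ 0 := by
        intro h0
        exact (Ordinal.opow_ne_zero e omega0_ne_zero)
          (le_antisymm (h0 ▸ le_self_add) (zero_le ..))
      have hlog : Ordinal.log ω (ω ^ e + ζ) = e := by
        apply le_antisymm
        · exact Order.lt_succ_iff.1 ((Ordinal.lt_opow_iff_log_lt one_lt_omega0 hne).1 h1)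
        · exact (Ordinal.opow_le_iff_le_log one_lt_omega0 hne).1 (le_self_add)
      rw [Hyp_ne_zero W hne, hlog, Ordinal.add_sub_cancel]
    · push_neg at hed
      have habs : ω ^ e + ζ = ζ :=
        Ordinal.add_absorp ((Ordinal.opow_lt_opow_iff_right one_lt_omega0).2 hed)
          (Ordinal.opow_log_le_self ω hζ)
      rw [habs]
      funext x
      show Hyp W ζ x = W e (Hyp W ζ x)
      rw [Hyp_ne_zero W hζ]
      exact (hWfix hed _).symm

theorem Hyp_normal (hWn : ∀ α : Ordinal.{u}, Order.IsNormal (W α)) :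
    ∀ ξ : Ordinal.{u}, Order.IsNormal (Hyp W ξ) := by
  intro ξ
  induction ξ using Ordinal.induction with
  | _ ξ ih =>
    by_cases h : ξ = 0
    · subst h; rw [Hyp_zero]; exact Order.IsNormal.id
    · rw [Hyp_ne_zero W h]
      exact (hWn _).comp (ih _ (sub_opow_log_lt h))

theorem Hyp_isWeak (hWn : ∀ α : Ordinal.{u}, Order.IsNormal (W α))
    (hWfix : ∀ {α γ : Ordinal.{u}}, α < γ → ∀ x, W α (W γ x) = W γ x)
    (hW0 : W 0 = f) : IsWeakHyperation f (Hyp W) := by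
  refine ⟨Hyp_normal hWn, Hyp_zero W, ?_, ?_⟩
  · have h := Hyp_omega_opow_add hWfix 0 0
    rw [opow_zero, add_zero, Hyp_zero] at h
    rw [h, Function.comp_id, hW0]
  · intro ξ
    induction ξ using Ordinal.induction with
    | _ ξ ih =>
      intro ζ
      by_cases h : ξ = 0
      · subst h; rw [zero_add, Hyp_zero, Function.id_comp]
      · have hle : ω ^ Ordinal.log ω ξ ≤ ξ := Ordinal.opow_log_le_self ω h
        have hξ : ω ^ Ordinal.log ω ξ + (ξ - ω ^ Ordinal.log ω ξ) = ξ :=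
          Ordinal.add_sub_cancel_of_le hle
        conv_lhs => rw [← hξ, add_assoc]
        have ihζ : ∀ ζ', Hyp W (ξ - ω ^ Ordinal.log ω ξ + ζ') =
            Hyp W (ξ - ω ^ Ordinal.log ω ξ) ∘ Hyp W ζ' := ih _ (sub_opow_log_lt h)
        rw [Hyp_omega_opow_add hWfix, ihζ ζ, ← Function.comp_assoc,
          ← Hyp_omega_opow_add hWfix, hξ]

theorem Hyp_omega
    (hWfix : ∀ {α γ : Ordinal.{u}}, α < γ → ∀ x, W α (W γ x) = W γ x)
    (α : Ordinal.{u}) : Hyp W (ω ^ α) = W α := by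
  have h := Hyp_omega_opow_add hWfix α 0
  rwa [add_zero, Hyp_zero, Function.comp_id] at h

/-- Fixed points of a normal function form a closed set. -/
theorem isClosed_fix {F : Ordinal.{v} → Ordinal.{v}} (hF : Order.IsNormal F) :
    IsClosed {x : Ordinal.{v} | F x = x} := by
  rw [Ordinal.isClosed_iff_iSup]
  intro ι hι k hk
  haveI := hι
  show F _ = _
  rw [hF.map_iSup Ordinal.bddAbove_of_small]
  exact iSup_congr hk

section Gside

variable {g : Ordinal.{u} → Ordinal.{v} → Ordinal.{v}}

/-- Absorption: values of `g (ω ^ γ)` are fixed points of `g (ω ^ α)` for `α < γ`. -/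
theorem Gfix (hgw : IsWeakHyperation f g) {α γ : Ordinal.{u}} (h : α < γ) (x : Ordinal.{v}) :
    g (ω ^ α) (g (ω ^ γ) x) = g (ω ^ γ) x := by
  have habs : ω ^ α + ω ^ γ = ω ^ γ :=
    Ordinal.add_absorp ((Ordinal.opow_lt_opow_iff_right one_lt_omega0).2 h) le_rfl
  have hc := congrFun (hgw.2.2.2 (ω ^ α) (ω ^ γ)) x
  rw [habs] at hc
  exact hc.symm

/-- The common fixed points of `g (ω ^ α)` for `α < β`. -/
def S (g : Ordinal.{u} → Ordinal.{v} → Ordinal.{v}) (β : Ordinal.{u}) : Set Ordinal.{v} :=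
  {x | ∀ α < β, g (ω ^ α) x = x}

theorem range_subset_S (hgw : IsWeakHyperation f g) (β : Ordinal.{u}) :
    Set.range (g (ω ^ β)) ⊆ S g β := by
  rintro _ ⟨ζ, rfl⟩ α hα
  exact Gfix hgw hα ζ

theorem not_bddAbove_S (hgw : IsWeakHyperation f g) (β : Ordinal.{u}) :
    ¬ BddAbove (S g β) := fun hb =>
  (hgw.1 (ω ^ β)).strictMono.not_bddAbove_range_of_wellFoundedLT
    (hb.mono (range_subset_S hgw β))

theorem isClosed_S (hgw : IsWeakHyperation f g) (β : Ordinal.{u}) : IsClosed (S g β) := by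
  have : S g β = ⋂ (α : Ordinal.{u}) (_ : α < β), {x : Ordinal.{v} | g (ω ^ α) x = x} := by
    ext x
    simp [S]
  rw [this]
  exact isClosed_iInter fun α => isClosed_iInter fun _ => isClosed_fix (hgw.1 _)

theorem isNormal_enumOrd_S (hgw : IsWeakHyperation f g) (β : Ordinal.{u}) :
    Order.IsNormal (Ordinal.enumOrd (S g β)) :=
  (Ordinal.enumOrd_isNormal_iff_isClosed (not_bddAbove_S hgw β)).2 (isClosed_S hgw β)

theorem enumOrd_S_le (hgw : IsWeakHyperation f g) (β : Ordinal.{u}) (ζ : Ordinal.{v}) :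
    Ordinal.enumOrd (S g β) ζ ≤ g (ω ^ β) ζ := by
  have hsm : StrictMono (g (ω ^ β)) := (hgw.1 _).strictMono
  calc Ordinal.enumOrd (S g β) ζ
      ≤ Ordinal.enumOrd (Set.range (g (ω ^ β))) ζ :=
        Ordinal.enumOrd_le_of_subset hsm.not_bddAbove_range_of_wellFoundedLT
          (range_subset_S hgw β) ζ
    _ = g (ω ^ β) ζ := by rw [Ordinal.enumOrd_range hsm]

/-- Key lemma: the minimal weak hyperation at `ω ^ β` enumerates the common
fixed points of all `g (ω ^ α)`, `α < β`. -/
theorem g_omega_opow_eq (hgw : IsWeakHyperation f g)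
    (hgmin : ∀ h : Ordinal.{u} → Ordinal.{v} → Ordinal.{v}, IsWeakHyperation f h →
      ∀ ξ ζ, g ξ ζ ≤ h ξ ζ)
    {β : Ordinal.{u}} (hβ : β ≠ 0) : g (ω ^ β) = Ordinal.enumOrd (S g β) := by
  set E := Ordinal.enumOrd (S g β) with hE
  -- the comparison family
  set A : Ordinal.{u} → Ordinal.{v} → Ordinal.{v} :=
    fun α => if α = β then E else g (ω ^ α) with hA
  have hAβ : A β = E := by rw [hA]; simp
  have hAne : ∀ {α}, α ≠ β → A α = g (ω ^ α) := by
    intro α h; rw [hA]; simp [h]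
  have hAn : ∀ α, Order.IsNormal (A α) := by
    intro α
    by_cases h : α = β
    · rw [h, hAβ]; exact isNormal_enumOrd_S hgw β
    · rw [hAne h]; exact hgw.1 _
  have hEfixg : ∀ {y : Ordinal.{v}}, g (ω ^ β) y = y → E y = y := by
    intro y hy
    have hyS : y ∈ S g β := by
      rw [← hy]
      exact range_subset_S hgw β ⟨y, rfl⟩
    apply le_antisymm
    · calc E y ≤ g (ω ^ β) y := enumOrd_S_le hgw β y
        _ = y := hy
    · exact Ordinal.le_enumOrd_self (not_bddAbove_S hgw β)
  have hAfix : ∀ {α γ : Ordinal.{u}}, α < γ → ∀ x, A α (A γ x) = A γ x := by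
    intro α γ hlt x
    by_cases hγ : γ = β
    · subst hγ
      have hα : α ≠ γ := hlt.ne
      rw [hAne hα, hAβ]
      exact Ordinal.enumOrd_mem (not_bddAbove_S hgw γ) x α hlt
    · by_cases hα : α = β
      · subst hα
        rw [hAβ, hAne hγ]
        exact hEfixg (Gfix hgw hlt x)
      · rw [hAne hα, hAne hγ]
        exact Gfix hgw hlt x
  have hA0 : A 0 = f := by
    rw [hAne (Ne.symm hβ), opow_zero, hgw.2.2.1]
  have hweak : IsWeakHyperation f (Hyp A) := Hyp_isWeak hAn hAfix hA0
  funext ζ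
  apply le_antisymm
  · have h := hgmin (Hyp A) hweak (ω ^ β) ζ
    rwa [Hyp_omega hAfix β, hAβ] at h
  · exact enumOrd_S_le hgw β ζ

end Gside

end Stmt11Aux

open Stmt11Aux in
/-- If `g` is the (minimal weak) hyperation of the normal function `f` and `V`
is the Veblen progression based on `f`, then `g (ω ^ α) = V α` for all `α`. -/
theorem stmt11 (f : Ordinal → Ordinal) (hf : Order.IsNormal f)
    (g : Ordinal → Ordinal → Ordinal) (hg : IsHyperation f g)
    (V : Ordinal → Ordinal → Ordinal) (hV : IsVeblenProgression f V) :
    ∀ α : Ordinal, g (ω ^ α) = V α := by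
  obtain ⟨hgw, hgmin⟩ := hg
  intro α
  induction α using Ordinal.limitRecOn with
  | zero => rw [opow_zero, hgw.2.2.1, hV.1]
  | add_one δ ih =>
      rw [hV.2.1 δ]
      have hset : {x | V δ x = x} = S g (δ + 1) := by
        ext x
        constructor
        · intro hx α hα
          rw [← ih] at hx
          rcases lt_or_eq_of_le (Order.lt_succ_iff.mp (Ordinal.add_one_eq_succ δ ▸ hα)) with h | h
          · rw [← hx]
            exact Gfix hgw h x
          · rw [h]; exact hx
        · intro hx
          rw [← ih]
          exact hx δ (lt_add_one δ)
      rw [hset]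
      exact g_omega_opow_eq hgw hgmin (fun h => not_lt_of_ge (by simp : (0 : Ordinal) ≤ δ) (h ▸ lt_add_one δ))
  | limit l hl ih =>
      rw [hV.2.2 l hl]
      have hset : {x | ∀ α < l, V α x = x} = S g l := by
        ext x
        constructor
        · intro hx α hα
          rw [ih α hα]
          exact hx α hα
        · intro hx α hα
          rw [← ih α hα]
          exact hx α hα
      rw [hset]
      exact g_omega_opow_eq hgw hgmin hl.bot_lt.ne'
end

section
/- Let f be a normal ordinal function with left adjoint g, let F be the hyperation of f and G the cohyperation of g. Then for all ordinals ξ < ζ and every ordinal α: G(ξ)(F(ζ)(α)) = F(−ξ + ζ)(α) and G(ζ)(F(ξ)(α)) = G(−ξ + ζ)(α). -/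
open Ordinal

/-- `f` is initial: the image under `f` of every initial segment `[0, β)` of the
ordinals is again an initial segment. -/
def IsInitialFun (f : Ordinal → Ordinal) : Prop :=
  ∀ β : Ordinal, ∃ γ : Ordinal, f '' Set.Iio β = Set.Iio γ

/-- `g` is a weak cohyperation of the initial function `f`: a family of initial
functions with `g 0 = id`, `g 1 = f`, and `g (ξ + ζ) = g ζ ∘ g ξ`. -/
def IsWeakCohyperation (f : Ordinal → Ordinal) (g : Ordinal → Ordinal → Ordinal) : Prop :=
  (∀ ξ : Ordinal, IsInitialFun (g ξ)) ∧
  g 0 = id ∧ g 1 = f ∧ ∀ ξ ζ : Ordinal, g (ξ + ζ) = g ζ ∘ g ξ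

/-- `g` is the cohyperation of `f`: the pointwise maximal weak cohyperation of `f`. -/
def IsCohyperation (f : Ordinal → Ordinal) (g : Ordinal → Ordinal → Ordinal) : Prop :=
  IsWeakCohyperation f g ∧
  ∀ h : Ordinal → Ordinal → Ordinal, IsWeakCohyperation f h → ∀ ξ ζ : Ordinal, h ξ ζ ≤ g ξ ζ

/-- `g` is a left adjoint of `f`: `α = f β` implies `g α = β`, and `α < f β`
implies `g α < β`. -/
def IsLeftAdjoint (g f : Ordinal → Ordinal) : Prop :=
  ∀ α β : Ordinal, (α = f β → g α = β) ∧ (α < f β → g α < β)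

namespace Stmt15Aux

open Ordinal Set

universe u v

theorem omega_opow_pos (c : Ordinal) : 0 < ω ^ c :=
  opow_pos c omega0_pos

theorem opow_succ_le_of_absorp {c x : Ordinal} (h : ω ^ c + x = x) : ω ^ (c + 1) ≤ x := by
  have key : ∀ n : ℕ, ω ^ c * n + x = x := by
    intro n
    induction n with
    | zero => simp
    | succ n IH =>
      have h1 : (↑(n + 1) : Ordinal) = Order.succ (n : Ordinal) := by
        rw [Nat.cast_succ, add_one_eq_succ]
      rw [h1, mul_succ, add_assoc, h, IH]
  have h2 : ω ^ (c + 1) = ω ^ c * ω := by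
    rw [add_one_eq_succ, opow_succ]
  rw [h2]
  rw [mul_le_iff_of_isSuccLimit isSuccLimit_omega0]
  intro b hb
  obtain ⟨n, rfl⟩ := lt_omega0.1 hb
  calc ω ^ c * n ≤ ω ^ c * n + x := le_self_add
  _ = x := key n

theorem lt_add_self_of_lt_opow {c x : Ordinal} (hx : x < ω ^ (c + 1)) : x < ω ^ c + x := by
  rcases lt_or_eq_of_le ((le_add_self : x ≤ ω ^ c + x)) with h | h
  · exact h
  · exact absurd (opow_succ_le_of_absorp h.symm) (not_le.2 hx)

theorem sub_log_lt {ξ : Ordinal} (hξ : ξ ≠ 0) : ξ - ω ^ log ω ξ < ξ := by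
  have hle : ω ^ log ω ξ ≤ ξ := opow_log_le_self ω hξ
  have hdec : ω ^ log ω ξ + (ξ - ω ^ log ω ξ) = ξ := Ordinal.add_sub_cancel_of_le hle
  have hlt : ξ - ω ^ log ω ξ < ω ^ (log ω ξ + 1) := by
    apply lt_of_le_of_lt (sub_le_self ξ _)
    rw [add_one_eq_succ]
    exact lt_opow_succ_log_self one_lt_omega0 ξ
  calc ξ - ω ^ log ω ξ < ω ^ log ω ξ + (ξ - ω ^ log ω ξ) := lt_add_self_of_lt_opow hlt
  _ = ξ := hdec

theorem opow_log_add_sub {ξ : Ordinal} (hξ : ξ ≠ 0) :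
    ω ^ log ω ξ + (ξ - ω ^ log ω ξ) = ξ :=
  Ordinal.add_sub_cancel_of_le (opow_log_le_self ω hξ)

theorem log_add_eq {ξ ζ : Ordinal} (hξ : ξ ≠ 0) (hζ : ζ < ω ^ (log ω ξ + 1)) :
    log ω (ξ + ζ) = log ω ξ := by
  have hne : ξ + ζ ≠ 0 := fun h => hξ (by
    have := (le_self_add : ξ ≤ ξ + ζ)
    rw [h] at this
    exact nonpos_iff_eq_zero.1 this)
  apply le_antisymm
  · have hlt : ξ + ζ < ω ^ (log ω ξ + 1) := by
      apply principal_add_omega0_opow _ _ hζ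
      rw [add_one_eq_succ]
      exact lt_opow_succ_log_self one_lt_omega0 ξ
    have := (lt_opow_iff_log_lt one_lt_omega0 hne).1 hlt
    rwa [add_one_eq_succ, Order.lt_succ_iff] at this
  · apply (opow_le_iff_le_log one_lt_omega0 hne).1
    exact le_trans (opow_log_le_self ω hξ) ((le_self_add : ξ ≤ ξ + ζ))

theorem add_lt_add_of_sum {ξ ζ : Ordinal} (hξ : ξ ≠ 0) (hζ : ζ < ω ^ (log ω ξ + 1)) :
    (ξ - ω ^ log ω ξ) + ζ < ξ + ζ := by
  set c := log ω ξ
  set r := ξ - ω ^ c with hr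
  have hdec : ω ^ c + r = ξ := opow_log_add_sub hξ
  have h1 : ξ + ζ = ω ^ c + (r + ζ) := by rw [← add_assoc, hdec]
  have h2 : r + ζ < ω ^ (c + 1) := by
    apply principal_add_omega0_opow
    · apply lt_of_le_of_lt (sub_le_self ξ _)
      rw [add_one_eq_succ]
      exact lt_opow_succ_log_self one_lt_omega0 ξ
    · exact hζ
  rw [h1]
  exact lt_add_self_of_lt_opow h2

theorem add_sub_log {ξ ζ : Ordinal} (hξ : ξ ≠ 0) :
    (ξ + ζ) - ω ^ log ω ξ = (ξ - ω ^ log ω ξ) + ζ := by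
  have hdec : ω ^ log ω ξ + (ξ - ω ^ log ω ξ) = ξ := opow_log_add_sub hξ
  have h1 : ξ + ζ = ω ^ log ω ξ + ((ξ - ω ^ log ω ξ) + ζ) := by rw [← add_assoc, hdec]
  rw [h1, Ordinal.add_sub_cancel]

/-- A set of ordinals which is bounded and downward closed is an initial segment. -/
theorem eq_Iio_of_downward {S : Set Ordinal} (b : Ordinal) (hb : ∀ x ∈ S, x < b)
    (hd : ∀ ⦃x y : Ordinal⦄, x ∈ S → y < x → y ∈ S) : ∃ γ, S = Set.Iio γ := by
  have hcne : Sᶜ.Nonempty := ⟨b, fun hbS => lt_irrefl b (hb b hbS)⟩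
  refine ⟨sInf Sᶜ, ?_⟩
  ext x
  simp only [Set.mem_Iio]
  constructor
  · intro hx
    by_contra hge
    push_neg at hge
    have hmem : sInf Sᶜ ∈ Sᶜ := csInf_mem hcne
    rcases lt_or_eq_of_le hge with h | h
    · exact hmem (hd hx h)
    · rw [h] at hmem; exact hmem hx
  · intro hx
    by_contra hxS
    exact absurd (csInf_le (OrderBot.bddBelow Sᶜ) (show x ∈ Sᶜ from hxS)) hx.not_ge

theorem initial_defl {k : Ordinal → Ordinal} (hk : IsInitialFun k) : ∀ x, k x ≤ x := by
  intro x
  induction x using Ordinal.induction with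
  | _ x IH =>
    by_contra hlt
    push_neg at hlt
    obtain ⟨γ, hγ⟩ := hk (x + 1)
    have hkx : k x ∈ Set.Iio γ := by
      rw [← hγ]
      exact ⟨x, by rw [Set.mem_Iio, add_one_eq_succ]; exact Order.lt_succ x, rfl⟩
    have hx : x ∈ Set.Iio γ := lt_trans hlt hkx
    rw [← hγ] at hx
    obtain ⟨y, hy, hyx⟩ := hx
    rw [Set.mem_Iio, add_one_eq_succ, Order.lt_succ_iff] at hy
    rcases lt_or_eq_of_le hy with h | rfl
    · have := IH y h
      rw [hyx] at this
      exact absurd h (not_lt.2 this)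
    · rw [hyx] at hlt; exact lt_irrefl _ hlt

theorem initial_comp {k l : Ordinal → Ordinal} (hk : IsInitialFun k) (hl : IsInitialFun l) :
    IsInitialFun (fun x => l (k x)) := by
  intro β
  obtain ⟨γ, hγ⟩ := hk β
  obtain ⟨δ, hδ⟩ := hl γ
  refine ⟨δ, ?_⟩
  rw [← hδ, ← hγ, ← Set.image_comp]
  rfl


/-! ### The canonical (minimal) hyperation -/

noncomputable def FT (f : Ordinal.{u} → Ordinal.{u}) : Ordinal.{v} → Ordinal.{u} → Ordinal.{u} :=
  lt_wf.fix fun ξ rec =>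
    if h0 : ξ = 0 then id
    else
      (if log ω ξ = 0 then f
       else enumOrd {x | ∀ η (hη : η < ω ^ log ω ξ),
          rec η (lt_of_lt_of_le hη (opow_log_le_self ω h0)) x = x}) ∘
      rec (ξ - ω ^ log ω ξ) (sub_log_lt h0)

/-- The common fixed points of `FT f η` for `η < ω ^ c`. -/
def CF (f : Ordinal.{u} → Ordinal.{u}) (c : Ordinal.{v}) : Set Ordinal.{u} :=
  {x | ∀ η, η < ω ^ c → FT f η x = x}

noncomputable def GenF (f : Ordinal.{u} → Ordinal.{u}) (c : Ordinal.{v}) :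
    Ordinal.{u} → Ordinal.{u} :=
  if c = 0 then f else enumOrd (CF f c)

theorem FT_def (f : Ordinal.{u} → Ordinal.{u}) (ξ : Ordinal.{v}) :
    FT f ξ = if h0 : ξ = 0 then id
      else GenF f (log ω ξ) ∘ FT f (ξ - ω ^ log ω ξ) := by
  rw [FT, WellFounded.fix_eq]
  rfl

theorem FT_zero (f : Ordinal.{u} → Ordinal.{u}) : FT.{u,v} f 0 = id := by
  rw [FT_def]; simp

theorem FT_pos (f : Ordinal.{u} → Ordinal.{u}) {ξ : Ordinal.{v}} (h0 : ξ ≠ 0) :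
    FT f ξ = GenF f (log ω ξ) ∘ FT f (ξ - ω ^ log ω ξ) := by
  rw [FT_def]; simp [h0]

theorem FT_one (f : Ordinal.{u} → Ordinal.{u}) : ∀ x, FT.{u,v} f 1 x = f x := by
  intro x
  rw [FT_pos f one_ne_zero, log_one_right]
  have h1 : (1 : Ordinal.{v}) - ω ^ (0 : Ordinal.{v}) = 0 := by
    rw [opow_zero, Ordinal.sub_self]
  show GenF f 0 (FT f ((1 : Ordinal.{v}) - ω ^ (0 : Ordinal.{v})) x) = f x
  rw [h1, FT_zero]
  unfold GenF
  rw [if_pos rfl]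
  rfl

theorem FT_opow (f : Ordinal.{u} → Ordinal.{u}) (c : Ordinal.{v}) :
    ∀ y, FT f (ω ^ c) y = GenF f c y := by
  intro y
  rw [FT_pos f (omega_opow_pos c).ne', log_opow one_lt_omega0, Ordinal.sub_self, FT_zero]
  rfl

section FTmain

variable {f : Ordinal.{u} → Ordinal.{u}} {F : Ordinal.{v} → Ordinal.{u} → Ordinal.{u}}

/-- The main simultaneous induction: each `FT f ξ` is normal and bounded by any
weak hyperation. -/
theorem FT_main (hf : Order.IsNormal f) (hFw : IsWeakHyperation f F) :
    ∀ ξ : Ordinal.{v}, Order.IsNormal (FT f ξ) ∧ ∀ x, FT f ξ x ≤ F ξ x := by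
  intro ξ
  induction ξ using Ordinal.induction with
  | _ ξ IH =>
    by_cases h0 : ξ = 0
    · constructor
      · rw [h0, FT_zero]; exact Order.IsNormal.id
      · intro x; rw [h0, FT_zero, hFw.2.1]
    · have hIHη : ∀ η, η < ω ^ log ω ξ → Order.IsNormal (FT f η) ∧ ∀ x, FT f η x ≤ F η x :=
        fun η hη => IH η (lt_of_lt_of_le hη (opow_log_le_self ω h0))
      have hFC : ∀ z, F (ω ^ log ω ξ) z ∈ CF f (log ω ξ) := by
        intro z η hη
        have h1 : F η (F (ω ^ log ω ξ) z) = F (ω ^ log ω ξ) z := by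
          have h2 := congrFun (hFw.2.2.2 η (ω ^ log ω ξ)) z
          rw [add_absorp hη le_rfl] at h2
          exact h2.symm
        have h2 : FT f η (F (ω ^ log ω ξ) z) ≤ F η (F (ω ^ log ω ξ) z) :=
          (hIHη η hη).2 _
        rw [h1] at h2
        exact le_antisymm h2 (hIHη η hη).1.strictMono.le_apply
      have hub : ¬ BddAbove (CF f (log ω ξ)) := by
        rintro ⟨b, hb⟩
        have h1 : F (ω ^ log ω ξ) (b + 1) ≤ b := hb (hFC (b + 1))
        have h2 : b + 1 ≤ F (ω ^ log ω ξ) (b + 1) := (hFw.1 _).strictMono.le_apply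
        have h3 : b + 1 ≤ b := le_trans h2 h1
        rw [add_one_eq_succ, Order.succ_le_iff] at h3
        exact lt_irrefl b h3
      have hGnorm : Order.IsNormal (GenF f (log ω ξ)) := by
        unfold GenF
        split
        · exact hf
        · next hc =>
          apply (enumOrd_isNormal_iff_isClosed hub).2
          apply isClosed_iff_iSup.2
          intro ι hι gg hgg
          intro η hη
          have hn : Nonempty ι := hι
          rw [(hIHη η hη).1.map_iSup (g := gg) bddAbove_of_small]
          congr 1
          funext i
          exact hgg i η hη
      have hGle : ∀ y, GenF f (log ω ξ) y ≤ F (ω ^ log ω ξ) y := by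
        by_cases hc : log ω ξ = 0
        · intro y
          unfold GenF
          rw [if_pos hc, hc, opow_zero, hFw.2.2.1]
        · intro y
          induction y using Ordinal.induction with
          | _ y IHy =>
            unfold GenF
            rw [if_neg hc]
            apply enumOrd_le_of_forall_lt (hFC y)
            intro b hb
            have h1 : enumOrd (CF f (log ω ξ)) b ≤ F (ω ^ log ω ξ) b := by
              have h2 := IHy b hb
              unfold GenF at h2
              rwa [if_neg hc] at h2
            exact lt_of_le_of_lt h1 ((hFw.1 _).strictMono hb)
      constructor
      · rw [FT_pos f h0]
        exact Order.IsNormal.comp hGnorm (IH _ (sub_log_lt h0)).1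
      · intro x
        rw [FT_pos f h0]
        have h1 : GenF f (log ω ξ) (FT f (ξ - ω ^ log ω ξ) x)
            ≤ GenF f (log ω ξ) (F (ξ - ω ^ log ω ξ) x) :=
          hGnorm.monotone ((IH _ (sub_log_lt h0)).2 x)
        have h2 := hGle (F (ξ - ω ^ log ω ξ) x)
        have h3 : F (ω ^ log ω ξ) (F (ξ - ω ^ log ω ξ) x) = F ξ x := by
          have h4 := congrFun (hFw.2.2.2 (ω ^ log ω ξ) (ξ - ω ^ log ω ξ)) x
          rw [opow_log_add_sub h0] at h4
          exact h4.symm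
        exact le_trans (le_trans h1 h2) h3.le

theorem FT_normal (hf : Order.IsNormal f) (hFw : IsWeakHyperation f F) (ξ : Ordinal.{v}) :
    Order.IsNormal (FT f ξ) :=
  (FT_main hf hFw ξ).1

theorem FT_le (hf : Order.IsNormal f) (hFw : IsWeakHyperation f F) (ξ : Ordinal.{v})
    (x : Ordinal.{u}) : FT f ξ x ≤ F ξ x :=
  (FT_main hf hFw ξ).2 x

theorem CF_unbounded (hf : Order.IsNormal f) (hFw : IsWeakHyperation f F) (c : Ordinal.{v}) :
    ¬ BddAbove (CF f c) := by
  have hFC : ∀ z, F (ω ^ c) z ∈ CF f c := by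
    intro z η hη
    have h1 : F η (F (ω ^ c) z) = F (ω ^ c) z := by
      have h2 := congrFun (hFw.2.2.2 η (ω ^ c)) z
      rw [add_absorp hη le_rfl] at h2
      exact h2.symm
    have h2 : FT f η (F (ω ^ c) z) ≤ F η (F (ω ^ c) z) := FT_le hf hFw η _
    rw [h1] at h2
    exact le_antisymm h2 (FT_normal hf hFw η).strictMono.le_apply
  rintro ⟨b, hb⟩
  have h1 : F (ω ^ c) (b + 1) ≤ b := hb (hFC (b + 1))
  have h2 : b + 1 ≤ F (ω ^ c) (b + 1) := (hFw.1 _).strictMono.le_apply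
  have h3 : b + 1 ≤ b := le_trans h2 h1
  rw [add_one_eq_succ, Order.succ_le_iff] at h3
  exact lt_irrefl b h3

theorem FT_fix (hf : Order.IsNormal f) (hFw : IsWeakHyperation f F) {ζ : Ordinal.{v}} (hζ : ζ ≠ 0)
    {η : Ordinal.{v}} (hη : η < ω ^ log ω ζ) (x : Ordinal.{u}) :
    FT f η (FT f ζ x) = FT f ζ x := by
  by_cases hd : log ω ζ = 0
  · rw [hd, opow_zero, lt_one_iff_zero] at hη
    rw [hη, FT_zero]
    rfl
  · rw [FT_pos f hζ]
    show FT f η (GenF f (log ω ζ) (FT f (ζ - ω ^ log ω ζ) x)) = _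
    unfold GenF
    rw [if_neg hd]
    exact enumOrd_mem (CF_unbounded hf hFw (log ω ζ)) _ η hη

theorem FT_zero_apply (hf : Order.IsNormal f) (hFw : IsWeakHyperation f F) (hf0 : f 0 = 0) :
    ∀ ξ : Ordinal.{v}, FT f ξ 0 = 0 := by
  intro ξ
  induction ξ using Ordinal.induction with
  | _ ξ IH =>
    by_cases h0 : ξ = 0
    · rw [h0, FT_zero]; rfl
    · rw [FT_pos f h0]
      show GenF f (log ω ξ) (FT f (ξ - ω ^ log ω ξ) 0) = 0
      rw [IH _ (sub_log_lt h0)]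
      by_cases hd : log ω ξ = 0
      · unfold GenF; rw [if_pos hd]; exact hf0
      · unfold GenF; rw [if_neg hd]
        apply le_antisymm _ zero_le
        rw [enumOrd_zero]
        apply csInf_le (OrderBot.bddBelow _)
        intro η hη
        exact IH η (lt_of_lt_of_le hη (opow_log_le_self ω h0))

theorem FT_hom (hf : Order.IsNormal f) (hFw : IsWeakHyperation f F) :
    ∀ s ξ ζ : Ordinal.{v}, ∀ x, ξ + ζ = s → FT f (ξ + ζ) x = FT f ξ (FT f ζ x) := by
  intro s
  induction s using Ordinal.induction with
  | _ s IH =>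
    intro ξ ζ x hs
    by_cases hξ0 : ξ = 0
    · rw [hξ0, zero_add, FT_zero]; rfl
    by_cases hζ0 : ζ = 0
    · rw [hζ0, add_zero, FT_zero]; rfl
    by_cases hζb : ζ < ω ^ (log ω ξ + 1)
    · have hne : ξ + ζ ≠ 0 := fun h =>
        hξ0 (nonpos_iff_eq_zero.1 (h ▸ (le_self_add : ξ ≤ ξ + ζ)))
      have hlog : log ω (ξ + ζ) = log ω ξ := log_add_eq hξ0 hζb
      rw [FT_pos f hne]
      show GenF f (log ω (ξ + ζ)) (FT f ((ξ + ζ) - ω ^ log ω (ξ + ζ)) x) = _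
      rw [hlog, add_sub_log hξ0]
      rw [IH _ (by rw [← hs]; exact add_lt_add_of_sum hξ0 hζb) _ _ x rfl]
      rw [FT_pos f hξ0]
      rfl
    · push_neg at hζb
      have hξlt : ξ < ω ^ (log ω ξ + 1) := by
        rw [add_one_eq_succ]; exact lt_opow_succ_log_self one_lt_omega0 ξ
      have habs : ξ + ζ = ζ := add_absorp hξlt hζb
      have hcd : log ω ξ + 1 ≤ log ω ζ :=
        (opow_le_iff_le_log one_lt_omega0 hζ0).1 hζb
      have hηd : ξ - ω ^ log ω ξ < ω ^ log ω ζ :=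
        lt_of_lt_of_le (lt_of_le_of_lt (sub_le_self ξ _) hξlt)
          (opow_le_opow_right omega0_pos hcd)
      have hωd : ω ^ log ω ξ < ω ^ log ω ζ :=
        lt_of_lt_of_le ((opow_lt_opow_iff_right one_lt_omega0).2 (lt_add_one _))
          (opow_le_opow_right omega0_pos hcd)
      rw [habs, FT_pos f hξ0]
      show FT f ζ x = GenF f (log ω ξ) (FT f (ξ - ω ^ log ω ξ) (FT f ζ x))
      rw [FT_fix hf hFw hζ0 hηd]
      rw [← FT_opow f (log ω ξ) (FT f ζ x)]
      rw [FT_fix hf hFw hζ0 hωd]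

theorem FT_weak (hf : Order.IsNormal f) (hFw : IsWeakHyperation f F) :
    IsWeakHyperation f (FT.{u,v} f) :=
  ⟨FT_normal hf hFw, FT_zero f, funext (FT_one f),
    fun ξ ζ => funext fun x => FT_hom hf hFw (ξ + ζ) ξ ζ x rfl⟩

theorem F_eq (hf : Order.IsNormal f) (hF : IsHyperation f F) (ξ : Ordinal.{v}) (x : Ordinal.{u}) :
    F ξ x = FT f ξ x :=
  le_antisymm (hF.2 (FT f) (FT_weak hf hF.1) ξ x) (FT_le hf hF.1 ξ x)

theorem F_fix_range (hf : Order.IsNormal f) (hF : IsHyperation f F) {c : Ordinal.{v}} (hc : c ≠ 0)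
    {β : Ordinal.{u}} (hfix : ∀ η, η < ω ^ c → F η β = β) : ∃ α, F (ω ^ c) α = β := by
  have hmem : β ∈ CF f c := by
    intro η hη
    rw [← F_eq hf hF]
    exact hfix η hη
  have hub := CF_unbounded hf hF.1 c
  have hrange : β ∈ Set.range (enumOrd (CF f c)) := by
    rw [range_enumOrd hub]
    exact hmem
  obtain ⟨b, hb⟩ := hrange
  refine ⟨b, ?_⟩
  rw [F_eq hf hF, FT_opow]
  unfold GenF
  rw [if_neg hc]
  exact hb

end FTmain

/-! ### Adjoint basics -/

section Adj

variable {f g : Ordinal.{u} → Ordinal.{u}}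

theorem adj_gf (hadj : IsLeftAdjoint g f) (β : Ordinal) : g (f β) = β :=
  (hadj (f β) β).1 rfl

theorem adj_lt (hadj : IsLeftAdjoint g f) {x β : Ordinal} (h : x < f β) : g x < β :=
  (hadj x β).2 h

theorem adj_f0 (hadj : IsLeftAdjoint g f) : f 0 = 0 := by
  by_contra h
  have h0 : (0 : Ordinal) < f 0 := pos_iff_ne_zero.2 h
  exact absurd (adj_lt hadj h0) not_lt_zero

theorem adj_fix (hadj : IsLeftAdjoint g f) {p : Ordinal} (hp : f p = p) : g p = p := by
  conv_lhs => rw [← hp]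
  rw [adj_gf hadj]

theorem adj_defl (hf : Order.IsNormal f) (hadj : IsLeftAdjoint g f) (x : Ordinal) : g x ≤ x := by
  have hx : x < f (x + 1) := by
    apply lt_of_lt_of_le _ hf.strictMono.le_apply
    rw [add_one_eq_succ]
    exact Order.lt_succ x
  have := adj_lt hadj hx
  rwa [add_one_eq_succ, Order.lt_succ_iff] at this

end Adj

/-! ### The family of left adjoints of a hyperation -/

noncomputable def AD (F : Ordinal.{v} → Ordinal.{u} → Ordinal.{u}) (ξ : Ordinal.{v}) (β : Ordinal.{u}) :
    Ordinal.{u} :=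
  sSup {α | F ξ α ≤ β}

section AD

variable {F : Ordinal.{v} → Ordinal.{u} → Ordinal.{u}}

theorem AD_bdd (hN : ∀ ξ, Order.IsNormal (F ξ)) (ξ : Ordinal.{v}) (β : Ordinal.{u}) : BddAbove {α | F ξ α ≤ β} :=
  ⟨β, fun α hα => le_trans (hN ξ).strictMono.le_apply hα⟩

theorem AD_nonempty (hz : ∀ ξ, F ξ 0 = 0) (ξ : Ordinal.{v}) (β : Ordinal.{u}) :
    Set.Nonempty {α | F ξ α ≤ β} :=
  ⟨0, by rw [Set.mem_setOf_eq, hz ξ]; exact zero_le⟩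

theorem AD_le_self (hN : ∀ ξ, Order.IsNormal (F ξ)) (hz : ∀ ξ, F ξ 0 = 0) (ξ : Ordinal.{v}) (β : Ordinal.{u}) :
    AD F ξ β ≤ β :=
  csSup_le (AD_nonempty hz ξ β) (fun α hα => le_trans (hN ξ).strictMono.le_apply hα)

theorem AD_spec (hN : ∀ ξ, Order.IsNormal (F ξ)) (hz : ∀ ξ, F ξ 0 = 0) (ξ : Ordinal.{v}) (β : Ordinal.{u}) :
    F ξ (AD F ξ β) ≤ β := by
  by_cases hmem : AD F ξ β ∈ {α | F ξ α ≤ β}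
  · exact hmem
  · exfalso
    apply hmem
    set s := AD F ξ β with hs
    have hS : ∀ x, x < s → F ξ x ≤ β := by
      intro x hx
      obtain ⟨a, ha, hxa⟩ := exists_lt_of_lt_csSup (AD_nonempty hz ξ β) hx
      exact le_trans ((hN ξ).monotone hxa.le) ha
    have hs0 : s ≠ 0 := by
      intro h
      apply hmem
      show F ξ s ≤ β
      rw [h, hz ξ]
      exact zero_le
    have hlim : Order.IsSuccLimit s := by
      refine Ordinal.isSuccLimit_iff.2 ⟨hs0, Order.isSuccPrelimit_of_succ_lt fun a ha => ?_⟩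
      by_contra hnot
      push_neg at hnot
      have hsa : s = Order.succ a := le_antisymm hnot (Order.succ_le_of_lt ha)
      apply hmem
      show F ξ s ≤ β
      have hle : s ≤ a := by
        apply csSup_le (AD_nonempty hz ξ β)
        intro b hb
        have hbs : b ≤ s := le_csSup (AD_bdd hN ξ β) hb
        rcases lt_or_eq_of_le hbs with hlt | heq
        · rw [hsa] at hlt
          exact Order.lt_succ_iff.1 hlt
        · exact absurd (heq ▸ hb) hmem
      exact absurd (lt_of_le_of_lt hle ha) (lt_irrefl s)
    exact ((hN ξ).le_iff_forall_le hlim).2 (fun b hb => hS b hb)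

theorem AD_exact (hN : ∀ ξ, Order.IsNormal (F ξ)) (ξ : Ordinal.{v}) (α : Ordinal.{u}) : AD F ξ (F ξ α) = α := by
  apply le_antisymm
  · show sSup {α' | F ξ α' ≤ F ξ α} ≤ α
    apply csSup_le ⟨α, Set.mem_setOf_eq ▸ le_refl (F ξ α)⟩
    intro b hb
    exact ((hN ξ).strictMono.le_iff_le).1 hb
  · exact le_csSup (AD_bdd hN ξ (F ξ α)) (Set.mem_setOf_eq ▸ le_refl (F ξ α))

theorem AD_mono (hN : ∀ ξ, Order.IsNormal (F ξ)) (hz : ∀ ξ, F ξ 0 = 0) (ξ : Ordinal.{v})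
    {β β' : Ordinal.{u}} (h : β ≤ β') : AD F ξ β ≤ AD F ξ β' :=
  csSup_le_csSup (AD_bdd hN ξ β') (AD_nonempty hz ξ β) (fun α hα => le_trans hα h)

theorem le_AD_iff (hN : ∀ ξ, Order.IsNormal (F ξ)) (hz : ∀ ξ, F ξ 0 = 0) {ξ : Ordinal.{v}} {α β : Ordinal.{u}} :
    α ≤ AD F ξ β ↔ F ξ α ≤ β := by
  constructor
  · intro h
    exact le_trans ((hN ξ).monotone h) (AD_spec hN hz ξ β)
  · intro h
    exact le_csSup (AD_bdd hN ξ β) h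

theorem AD_hom (hN : ∀ ξ, Order.IsNormal (F ξ)) (hz : ∀ ξ, F ξ 0 = 0)
    (hhom : ∀ ξ ζ x, F (ξ + ζ) x = F ξ (F ζ x)) (ξ ζ : Ordinal.{v}) (β : Ordinal.{u}) :
    AD F (ξ + ζ) β = AD F ζ (AD F ξ β) := by
  have hset : {α | F (ξ + ζ) α ≤ β} = {α | F ζ α ≤ AD F ξ β} := by
    ext α
    simp only [Set.mem_setOf_eq]
    rw [hhom ξ ζ α]
    exact (le_AD_iff hN hz).symm
  show sSup {α | F (ξ + ζ) α ≤ β} = AD F ζ (AD F ξ β)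
  rw [hset]
  rfl

theorem AD_strict (hN : ∀ ξ, Order.IsNormal (F ξ)) (hz : ∀ ξ, F ξ 0 = 0) {ξ : Ordinal.{v}} {δ α : Ordinal.{u}}
    (h : δ < F ξ α) : AD F ξ δ < α := by
  have h1 : F ξ (AD F ξ δ) < F ξ α := lt_of_le_of_lt (AD_spec hN hz ξ δ) h
  exact (hN ξ).strictMono.lt_iff_lt.1 h1

theorem g_le_AD1 {f g : Ordinal.{u} → Ordinal.{u}} (hadj : IsLeftAdjoint g f)
    (hN : ∀ ξ, Order.IsNormal (F ξ)) (hz : ∀ ξ, F ξ 0 = 0) (h1 : ∀ x, F 1 x = f x)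
    (β : Ordinal.{u}) : g β ≤ AD F 1 β := by
  by_contra h
  push_neg at h
  have h2 : ¬ F 1 (AD F 1 β + 1) ≤ β := by
    intro hle
    have h3 : AD F 1 β + 1 ≤ AD F 1 β := le_csSup (AD_bdd hN 1 β) hle
    rw [add_one_eq_succ] at h3
    exact absurd (Order.succ_le_iff.1 h3) (lt_irrefl _)
  push_neg at h2
  rw [h1] at h2
  have := adj_lt hadj h2
  rw [add_one_eq_succ, Order.lt_succ_iff] at this
  exact absurd h this.not_gt
end AD

/-! ### The canonical cohyperation attached to `g` -/

noncomputable def HT (g : Ordinal.{u} → Ordinal.{u})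
    (F : Ordinal.{v} → Ordinal.{u} → Ordinal.{u}) : Ordinal.{v} → Ordinal.{u} → Ordinal.{u} :=
  lt_wf.fix fun ξ rec x =>
    if h0 : ξ = 0 then x
    else
      rec (ξ - ω ^ log ω ξ) (sub_log_lt h0) <|
        if log ω ξ = 0 then g x
        else AD F (ω ^ log ω ξ)
          (sInf {v | ∃ η, ∃ hη : η < ω ^ log ω ξ,
            rec η (lt_of_lt_of_le hη (opow_log_le_self ω h0)) x = v})

noncomputable def SC (g : Ordinal.{u} → Ordinal.{u})
    (F : Ordinal.{v} → Ordinal.{u} → Ordinal.{u}) (c : Ordinal.{v}) (x : Ordinal.{u}) : Ordinal.{u} :=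
  sInf {v | ∃ η, ∃ _ : η < ω ^ c, HT g F η x = v}

noncomputable def GenT (g : Ordinal.{u} → Ordinal.{u})
    (F : Ordinal.{v} → Ordinal.{u} → Ordinal.{u}) (c : Ordinal.{v}) (x : Ordinal.{u}) : Ordinal.{u} :=
  if c = 0 then g x else AD F (ω ^ c) (SC g F c x)

section HT

variable {f g : Ordinal.{u} → Ordinal.{u}} {F : Ordinal.{v} → Ordinal.{u} → Ordinal.{u}}

theorem HT_def (g : Ordinal.{u} → Ordinal.{u}) (F : Ordinal.{v} → Ordinal.{u} → Ordinal.{u})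
    (ξ : Ordinal.{v}) (x : Ordinal.{u}) :
    HT g F ξ x = if h0 : ξ = 0 then x
      else HT g F (ξ - ω ^ log ω ξ) (GenT g F (log ω ξ) x) := by
  show lt_wf.fix (C := fun _ => Ordinal.{u} → Ordinal.{u}) _ ξ x = _
  rw [WellFounded.fix_eq]
  rfl

theorem HT_zero (g : Ordinal.{u} → Ordinal.{u}) (F : Ordinal.{v} → Ordinal.{u} → Ordinal.{u})
    (x : Ordinal.{u}) : HT g F 0 x = x := by
  rw [HT_def]; simp

theorem HT_pos {ξ : Ordinal.{v}} (h0 : ξ ≠ 0) (x : Ordinal.{u}) :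
    HT g F ξ x = HT g F (ξ - ω ^ log ω ξ) (GenT g F (log ω ξ) x) := by
  rw [HT_def]; simp [h0]

theorem HT_one (g : Ordinal.{u} → Ordinal.{u}) (F : Ordinal.{v} → Ordinal.{u} → Ordinal.{u})
    (x : Ordinal.{u}) : HT g F 1 x = g x := by
  rw [HT_pos one_ne_zero, log_one_right]
  have h1 : (1 : Ordinal.{v}) - ω ^ (0 : Ordinal.{v}) = 0 := by
    rw [opow_zero, Ordinal.sub_self]
  show HT g F ((1 : Ordinal.{v}) - ω ^ (0:Ordinal.{v})) (GenT g F 0 x) = g x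
  rw [h1, HT_zero]
  unfold GenT
  rw [if_pos rfl]

theorem SC_mem (g : Ordinal.{u} → Ordinal.{u}) (F : Ordinal.{v} → Ordinal.{u} → Ordinal.{u})
    (c : Ordinal.{v}) (x : Ordinal.{u}) : x ∈ {v | ∃ η, ∃ _ : η < ω ^ c, HT g F η x = v} :=
  ⟨0, omega_opow_pos c, HT_zero g F x⟩

theorem SC_le (g : Ordinal.{u} → Ordinal.{u}) (F : Ordinal.{v} → Ordinal.{u} → Ordinal.{u})
    (c : Ordinal.{v}) (x : Ordinal.{u}) : SC g F c x ≤ x :=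
  csInf_le (OrderBot.bddBelow _) (SC_mem g F c x)

theorem HT_defl (hgd : ∀ x, g x ≤ x) (hN : ∀ ξ, Order.IsNormal (F ξ)) (hz : ∀ ξ, F ξ 0 = 0) :
    ∀ (ξ : Ordinal.{v}) (x : Ordinal.{u}), HT g F ξ x ≤ x := by
  intro ξ
  induction ξ using Ordinal.induction with
  | _ ξ IH =>
    intro x
    by_cases h0 : ξ = 0
    · rw [h0, HT_zero]
    · rw [HT_pos h0]
      have h1 : HT g F (ξ - ω ^ log ω ξ) (GenT g F (log ω ξ) x) ≤ GenT g F (log ω ξ) x :=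
        IH _ (sub_log_lt h0) _
      apply le_trans h1
      unfold GenT
      split
      · exact hgd x
      · exact le_trans (AD_le_self hN hz _ _) (SC_le g F _ x)

theorem HT_hom (hgd : ∀ x, g x ≤ x) (hN : ∀ ξ, Order.IsNormal (F ξ)) (hz : ∀ ξ, F ξ 0 = 0) :
    ∀ s ξ ζ : Ordinal.{v}, ∀ x : Ordinal.{u}, ξ + ζ = s → HT g F (ξ + ζ) x = HT g F ζ (HT g F ξ x) := by
  intro s
  induction s using Ordinal.induction with
  | _ s IH =>
    intro ξ ζ x hs
    by_cases hξ0 : ξ = 0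
    · rw [hξ0, zero_add, HT_zero]
    by_cases hζ0 : ζ = 0
    · rw [hζ0, add_zero, HT_zero]
    by_cases hζb : ζ < ω ^ (log ω ξ + 1)
    · have hne : ξ + ζ ≠ 0 := fun h =>
        hξ0 (nonpos_iff_eq_zero.1 (h ▸ (le_self_add : ξ ≤ ξ + ζ)))
      have hlog : log ω (ξ + ζ) = log ω ξ := log_add_eq hξ0 hζb
      rw [HT_pos hne, hlog, add_sub_log hξ0]
      rw [IH _ (by rw [← hs]; exact add_lt_add_of_sum hξ0 hζb) _ _ _ rfl]
      rw [HT_pos hξ0]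
    · push_neg at hζb
      have hξlt : ξ < ω ^ (log ω ξ + 1) := by
        rw [add_one_eq_succ]; exact lt_opow_succ_log_self one_lt_omega0 ξ
      have habs : ξ + ζ = ζ := add_absorp hξlt hζb
      have hcd : log ω ξ + 1 ≤ log ω ζ :=
        (opow_le_iff_le_log one_lt_omega0 hζ0).1 hζb
      have hd0 : log ω ζ ≠ 0 := by
        intro h
        rw [h, nonpos_iff_eq_zero, add_one_eq_succ] at hcd
        exact Ordinal.succ_ne_zero _ hcd
      have hξd : ξ < ω ^ log ω ζ :=
        lt_of_lt_of_le hξlt (opow_le_opow_right omega0_pos hcd)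
      have hζs : ζ = s := by rw [← hs, habs]
      have key : ∀ η, η < ω ^ log ω ζ → HT g F η (HT g F ξ x) = HT g F (ξ + η) x := by
        intro η hη
        have hlt : ξ + η < s := by
          rw [← hζs]
          exact lt_of_lt_of_le (principal_add_omega0_opow _ hξd hη)
            (opow_log_le_self ω hζ0)
        exact (IH _ hlt ξ η x rfl).symm
      have hSC : SC g F (log ω ζ) (HT g F ξ x) = SC g F (log ω ζ) x := by
        apply le_antisymm
        · obtain ⟨η₀, hη₀, hmin⟩ := csInf_mem ⟨x, SC_mem g F (log ω ζ) x⟩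
          have hstep1 : SC g F (log ω ζ) (HT g F ξ x) ≤ HT g F η₀ (HT g F ξ x) :=
            csInf_le (OrderBot.bddBelow _) ⟨η₀, hη₀, rfl⟩
          have hstep2 : HT g F η₀ (HT g F ξ x) = HT g F (ξ + η₀) x := key η₀ hη₀
          have hτ : η₀ + ((ξ + η₀) - η₀) = ξ + η₀ :=
            Ordinal.add_sub_cancel_of_le ((le_add_self : η₀ ≤ ξ + η₀))
          have hlt2 : ξ + η₀ < s := by
            rw [← hζs]
            exact lt_of_lt_of_le (principal_add_omega0_opow _ hξd hη₀)
              (opow_log_le_self ω hζ0)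
          have hstep3 : HT g F (ξ + η₀) x = HT g F ((ξ + η₀) - η₀) (HT g F η₀ x) := by
            conv_lhs => rw [← hτ]
            exact IH _ hlt2 η₀ _ x hτ
          have hstep4 : HT g F ((ξ + η₀) - η₀) (HT g F η₀ x) ≤ HT g F η₀ x :=
            HT_defl hgd hN hz _ _
          calc SC g F (log ω ζ) (HT g F ξ x) ≤ HT g F η₀ (HT g F ξ x) := hstep1
            _ = HT g F (ξ + η₀) x := hstep2
            _ = HT g F ((ξ + η₀) - η₀) (HT g F η₀ x) := hstep3
            _ ≤ HT g F η₀ x := hstep4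
            _ = SC g F (log ω ζ) x := hmin
        · refine csInf_le_csInf (OrderBot.bddBelow _) ?_ ?_
          · exact ⟨HT g F ξ x, SC_mem g F (log ω ζ) (HT g F ξ x)⟩
          · rintro v ⟨η, hη, rfl⟩
            exact ⟨ξ + η, principal_add_omega0_opow _ hξd hη, (key η hη).symm⟩
      rw [habs, HT_pos hζ0 x, HT_pos hζ0 (HT g F ξ x)]
      congr 1
      unfold GenT
      rw [if_neg hd0, if_neg hd0, hSC]

theorem HT_inv (hadj : IsLeftAdjoint g f) (hN : ∀ ξ, Order.IsNormal (F ξ))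
    (hFhom : ∀ ξ ζ x, F (ξ + ζ) x = F ξ (F ζ x)) (hF1 : ∀ x, F 1 x = f x)
    (hF0 : ∀ x, F 0 x = x) :
    ∀ (ξ : Ordinal.{v}) (w : Ordinal.{u}), HT g F ξ (F ξ w) = w := by
  intro ξ
  induction ξ using Ordinal.induction with
  | _ ξ IH =>
    intro w
    by_cases h0 : ξ = 0
    · rw [h0, hF0, HT_zero]
    · have hdec : ω ^ log ω ξ + (ξ - ω ^ log ω ξ) = ξ := opow_log_add_sub h0
      have hsplit : F ξ w = F (ω ^ log ω ξ) (F (ξ - ω ^ log ω ξ) w) := by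
        conv_lhs => rw [← hdec]
        exact hFhom _ _ w
      rw [HT_pos h0]
      by_cases hc : log ω ξ = 0
      · have hgen : GenT g F (log ω ξ) (F ξ w) = F (ξ - ω ^ log ω ξ) w := by
          unfold GenT
          rw [if_pos hc, hsplit, hc, opow_zero, hF1, adj_gf hadj]
        rw [hgen]
        exact IH _ (sub_log_lt h0) w
      · set z := F (ω ^ log ω ξ) (F (ξ - ω ^ log ω ξ) w) with hz
        have hfixz : ∀ η, η < ω ^ log ω ξ → HT g F η z = z := by
          intro η hη
          have hfz : F η z = z := by
            rw [hz, ← hFhom, add_absorp hη le_rfl]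
          calc HT g F η z = HT g F η (F η z) := by rw [hfz]
            _ = z := IH η (lt_of_lt_of_le hη (opow_log_le_self ω h0)) z
        have hSC : SC g F (log ω ξ) z = z := by
          apply le_antisymm (SC_le g F _ z)
          apply le_csInf ⟨z, SC_mem g F _ z⟩
          rintro v ⟨η, hη, rfl⟩
          rw [hfixz η hη]
        have hgen : GenT g F (log ω ξ) (F ξ w) = F (ξ - ω ^ log ω ξ) w := by
          unfold GenT
          rw [if_neg hc, hsplit, hSC, hz, AD_exact hN]
        rw [hgen]
        exact IH _ (sub_log_lt h0) w

theorem HT_initial (hgi : IsInitialFun g) (hadj : IsLeftAdjoint g f)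
    (hN : ∀ ξ, Order.IsNormal (F ξ)) (hz : ∀ ξ, F ξ 0 = 0)
    (hWhom : ∀ ξ ζ x, F (ξ + ζ) x = F ξ (F ζ x)) (hF1 : ∀ x, F 1 x = f x)
    (hF0 : ∀ x, F 0 x = x) :
    ∀ ξ : Ordinal.{v}, IsInitialFun (HT g F ξ) := by
  intro ξ
  induction ξ using Ordinal.induction with
  | _ ξ IH =>
    by_cases h0 : ξ = 0
    · have hid : HT g F ξ = fun x => x := funext fun x => by rw [h0, HT_zero]
      intro β
      exact ⟨β, by rw [hid, Set.image_id']⟩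
    · have hcomp : HT g F ξ = fun x => HT g F (ξ - ω ^ log ω ξ) (GenT g F (log ω ξ) x) :=
        funext fun x => HT_pos h0 x
      rw [hcomp]
      apply initial_comp _ (IH _ (sub_log_lt h0))
      -- GenT is initial
      by_cases hc : log ω ξ = 0
      · have hEq : GenT g F (log ω ξ) = g := funext fun x => by unfold GenT; rw [if_pos hc]
        rw [hEq]
        exact hgi
      · intro β
        apply eq_Iio_of_downward (b := β)
        · rintro v ⟨x, hx, rfl⟩
          calc GenT g F (log ω ξ) x ≤ x := by
                unfold GenT
                rw [if_neg hc]
                exact le_trans (AD_le_self hN hz _ _) (SC_le g F _ x)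
            _ < β := hx
        · rintro v y ⟨x, hx, rfl⟩ hy
          -- y < GenT c x, x < β; produce preimage z
          have hvy : y < AD F (ω ^ log ω ξ) (SC g F (log ω ξ) x) := by
            have : GenT g F (log ω ξ) x = AD F (ω ^ log ω ξ) (SC g F (log ω ξ) x) := by
              unfold GenT; rw [if_neg hc]
            rwa [this] at hy
          set z := F (ω ^ log ω ξ) y with hzdef
          have hz1 : z < x := by
            calc z < F (ω ^ log ω ξ) (AD F (ω ^ log ω ξ) (SC g F (log ω ξ) x)) :=
                  (hN _).strictMono hvy
              _ ≤ SC g F (log ω ξ) x := AD_spec hN hz _ _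
              _ ≤ x := SC_le g F _ x
          refine ⟨z, lt_trans hz1 hx, ?_⟩
          -- GenT c z = y
          have hfixz : ∀ η, η < ω ^ log ω ξ → HT g F η z = z := by
            intro η hη
            have hfz : F η z = z := by
              rw [hzdef, ← hWhom, add_absorp hη le_rfl]
            calc HT g F η z = HT g F η (F η z) := by rw [hfz]
              _ = z := HT_inv hadj hN hWhom hF1 hF0 η z
          have hSC : SC g F (log ω ξ) z = z := by
            apply le_antisymm (SC_le g F _ z)
            apply le_csInf ⟨z, SC_mem g F _ z⟩
            rintro v ⟨η, hη, rfl⟩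
            rw [hfixz η hη]
          unfold GenT
          rw [if_neg hc, hSC, hzdef, AD_exact hN]

theorem HT_weak (hgi : IsInitialFun g) (hgd : ∀ x, g x ≤ x) (hadj : IsLeftAdjoint g f)
    (hN : ∀ ξ, Order.IsNormal (F ξ)) (hz : ∀ ξ, F ξ 0 = 0)
    (hWhom : ∀ ξ ζ x, F (ξ + ζ) x = F ξ (F ζ x)) (hF1 : ∀ x, F 1 x = f x)
    (hF0 : ∀ x, F 0 x = x) :
    IsWeakCohyperation g (HT.{u,v} g F) :=
  ⟨HT_initial hgi hadj hN hz hWhom hF1 hF0,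
   funext (HT_zero g F), funext (HT_one g F),
   fun ξ ζ => funext fun x => HT_hom hgd hN hz (ξ + ζ) ξ ζ x rfl⟩

end HT

/-! ### Every weak cohyperation is bounded by the adjoint family -/

theorem K_le_AD {f g : Ordinal.{u} → Ordinal.{u}} {F : Ordinal.{v} → Ordinal.{u} → Ordinal.{u}}
    (hf : Order.IsNormal f) (hadj : IsLeftAdjoint g f) (hF : IsHyperation f F)
    {K : Ordinal.{v} → Ordinal.{u} → Ordinal.{u}} (hK : IsWeakCohyperation g K) :
    ∀ (β : Ordinal.{u}) (ξ : Ordinal.{v}), K ξ β ≤ AD F ξ β := by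
  have hN : ∀ ξ, Order.IsNormal (F ξ) := hF.1.1
  have hz : ∀ ξ, F ξ 0 = 0 := fun ξ => by
    rw [F_eq hf hF]; exact FT_zero_apply hf hF.1 (adj_f0 hadj) ξ
  have hhom : ∀ ξ ζ x, F (ξ + ζ) x = F ξ (F ζ x) := fun ξ ζ x =>
    congrFun (hF.1.2.2.2 ξ ζ) x
  have hF1 : ∀ x, F 1 x = f x := fun x => by rw [hF.1.2.2.1]
  have hF0 : ∀ x, F 0 x = x := fun x => by rw [hF.1.2.1]; rfl
  intro β
  induction β using Ordinal.induction with
  | _ β IHβ =>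
    intro ξ
    induction ξ using limitRecOn with
    | zero =>
      have h1 : K 0 β = β := by rw [hK.2.1]; rfl
      have h2 : AD F 0 β = β := by
        calc AD F 0 β = AD F 0 (F 0 β) := by rw [hF0]
          _ = β := AD_exact hN 0 β
      rw [h1, h2]
    | add_one η IHη =>
      rw [add_one_eq_succ]
      have h1 : K (Order.succ η) β = g (K η β) := by
        rw [← add_one_eq_succ]
        have h2 := congrFun (hK.2.2.2 η 1) β
        have h3 : K 1 (K η β) = g (K η β) := by rw [hK.2.2.1]
        rw [h2]
        exact h3
      rw [h1]
      calc g (K η β) ≤ AD F 1 (K η β) := g_le_AD1 hadj hN hz hF1 _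
        _ ≤ AD F 1 (AD F η β) := AD_mono hN hz 1 IHη
        _ = AD F (η + 1) β := (AD_hom hN hz hhom η 1 β).symm
        _ = AD F (Order.succ η) β := by rw [add_one_eq_succ]
    | limit lam hlam IHξ =>
      by_cases hfix : ∀ η, 0 < η → η < lam → K η β = β
      · have hFfix : ∀ η, η < lam → F η β = β := by
          intro η hη
          rcases eq_zero_or_pos η with rfl | hpos
          · exact hF0 β
          · have h1 : β ≤ AD F η β := by
              have h0 := IHξ η hη
              rwa [hfix η hpos hη] at h0
            have h2 : AD F η β = β := le_antisymm (AD_le_self hN hz η β) h1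
            have h3 : F η β ≤ β := by
              have h4 := AD_spec hN hz η β
              rwa [h2] at h4
            exact le_antisymm h3 (hN η).strictMono.le_apply
        by_cases hdecomp : ∃ μ, ∃ ν, μ < lam ∧ ν < lam ∧ μ + ν = lam
        · obtain ⟨μ, ν, hμ, hν, hsum⟩ := hdecomp
          have h1 : F lam β = β := by
            rw [← hsum, hhom, hFfix ν hν, hFfix μ hμ]
          have h2 : β ≤ AD F lam β := le_csSup (AD_bdd hN lam β) (le_of_eq h1)
          exact le_trans (initial_defl (hK.1 lam) β) h2
        · have hP : IsPrincipal (· + ·) lam := by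
            intro a b ha hb
            by_contra hab
            push_neg at hab
            have hν : a + (lam - a) = lam := Ordinal.add_sub_cancel_of_le ha.le
            have h2 : lam - a ≤ b := by
              have h3 : a + (lam - a) ≤ a + b := by rw [hν]; exact hab
              exact (add_le_add_iff_left a).1 h3
            exact hdecomp ⟨a, lam - a, ha, lt_of_le_of_lt h2 hb, hν⟩
          rcases principal_add_iff_zero_or_omega0_opow.1 hP with rfl | ⟨c, rfl⟩
          · exact absurd hlam not_isSuccLimit_zero
          · have hc0 : c ≠ 0 := by
              intro h
              subst h
              simp only [opow_zero] at hlam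
              exact absurd (hlam.succ_lt zero_lt_one) (by simp)
            obtain ⟨ah, hah⟩ := F_fix_range hf hF hc0 (fun η hη => hFfix η hη)
            have hAD : AD F (ω ^ c) β = ah := by rw [← hah, AD_exact hN]
            show K (ω ^ c) β ≤ AD F (ω ^ c) β
            rw [hAD]
            by_contra hcon
            push_neg at hcon
            obtain ⟨γ, hγ⟩ := hK.1 (ω ^ c) (β + 1)
            have hv : K (ω ^ c) β < γ := by
              have hmem : K (ω ^ c) β ∈ Set.Iio γ := by
                rw [← hγ]
                exact ⟨β, by rw [Set.mem_Iio, add_one_eq_succ]; exact Order.lt_succ β, rfl⟩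
              exact hmem
            have hahγ : ah ∈ Set.Iio γ := lt_trans hcon hv
            rw [← hγ] at hahγ
            obtain ⟨x, hx, hxv⟩ := hahγ
            rw [Set.mem_Iio, add_one_eq_succ, Order.lt_succ_iff] at hx
            rcases lt_or_eq_of_le hx with hxβ | rfl
            · have h5 : K (ω ^ c) x ≤ AD F (ω ^ c) x := IHβ x hxβ (ω ^ c)
              have h6 : AD F (ω ^ c) x < ah :=
                AD_strict hN hz (show x < F (ω ^ c) ah from hah.symm ▸ hxβ)
              rw [hxv] at h5
              exact absurd (lt_of_le_of_lt h5 h6) (lt_irrefl ah)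
            · rw [hxv] at hcon
              exact lt_irrefl _ hcon
      · push_neg at hfix
        obtain ⟨η, hpos, heta, hne⟩ := hfix
        have hlt : K η β < β := lt_of_le_of_ne (initial_defl (hK.1 η) β) hne
        have hsum : η + (lam - η) = lam := Ordinal.add_sub_cancel_of_le heta.le
        have h1 : K lam β = K (lam - η) (K η β) := by
          conv_lhs => rw [← hsum]
          exact congrFun (hK.2.2.2 η (lam - η)) β
        rw [h1]
        calc K (lam - η) (K η β) ≤ AD F (lam - η) (K η β) := IHβ _ hlt _
          _ ≤ AD F (lam - η) (AD F η β) := AD_mono hN hz _ (IHξ η heta)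
          _ = AD F lam β := by rw [← AD_hom hN hz hhom, hsum]

/-! ### Main lemma: `G ξ` inverts `F ξ` -/

theorem main {f g : Ordinal.{u} → Ordinal.{u}} {F G : Ordinal.{v} → Ordinal.{u} → Ordinal.{u}}
    (hf : Order.IsNormal f) (hadj : IsLeftAdjoint g f)
    (hF : IsHyperation f F) (hG : IsCohyperation g G) :
    ∀ (ξ : Ordinal.{v}) (w : Ordinal.{u}), G ξ (F ξ w) = w := by
  have hN : ∀ ξ, Order.IsNormal (F ξ) := hF.1.1
  have hz : ∀ ξ, F ξ 0 = 0 := fun ξ => by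
    rw [F_eq hf hF]; exact FT_zero_apply hf hF.1 (adj_f0 hadj) ξ
  have hhom : ∀ ξ ζ x, F (ξ + ζ) x = F ξ (F ζ x) := fun ξ ζ x =>
    congrFun (hF.1.2.2.2 ξ ζ) x
  have hF1 : ∀ x, F 1 x = f x := fun x => by rw [hF.1.2.2.1]
  have hF0 : ∀ x, F 0 x = x := fun x => by rw [hF.1.2.1]; rfl
  have hgi : IsInitialFun g := by
    have h := hG.1.1 1
    rwa [hG.1.2.2.1] at h
  have hgd : ∀ x, g x ≤ x := adj_defl hf hadj
  intro ξ w
  apply le_antisymm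
  · have h1 := K_le_AD hf hadj hF hG.1 (F ξ w) ξ
    rwa [AD_exact hN] at h1
  · have h2 : HT g F ξ (F ξ w) ≤ G ξ (F ξ w) :=
      hG.2 (HT g F) (HT_weak hgi hgd hadj hN hz hhom hF1 hF0) ξ (F ξ w)
    rwa [HT_inv hadj hN hhom hF1 hF0] at h2

end Stmt15Aux

/-- Let `f` be normal with left adjoint `g`, let `F` be the hyperation of `f` and
`G` the cohyperation of `g`. Then for `ξ < ζ` and any `α`:
`G ξ (F ζ α) = F (−ξ + ζ) α` and `G ζ (F ξ α) = G (−ξ + ζ) α`. -/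
theorem stmt15 (f g : Ordinal → Ordinal) (hf : Order.IsNormal f)
    (hadj : IsLeftAdjoint g f)
    (F G : Ordinal → Ordinal → Ordinal)
    (hF : IsHyperation f F) (hG : IsCohyperation g G)
    (ξ ζ α : Ordinal) (hξζ : ξ < ζ) :
    G ξ (F ζ α) = F (ζ - ξ) α ∧ G ζ (F ξ α) = G (ζ - ξ) α := by
  have hsum : ξ + (ζ - ξ) = ζ := Ordinal.add_sub_cancel_of_le hξζ.le
  have hmain := Stmt15Aux.main (f := f) (g := g) (F := F) (G := G) hf hadj hF hG
  constructor
  · have h1 : F ζ α = F ξ (F (ζ - ξ) α) := by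
      conv_lhs => rw [← hsum]
      exact congrFun (hF.1.2.2.2 ξ (ζ - ξ)) α
    rw [h1, hmain ξ (F (ζ - ξ) α)]
  · have h2 : G ζ (F ξ α) = G (ζ - ξ) (G ξ (F ξ α)) := by
      conv_lhs => rw [← hsum]
      exact congrFun (hG.1.2.2.2 ξ (ζ - ξ)) (F ξ α)
    rw [h2, hmain ξ α]
end

section
/- Let E be the hyperation of e and L the cohyperation of the end-logarithm ℓ. Then for all ordinals ρ, β, ξ: L(ω^ρ)(E(ω^β)(ξ)) equals E(ω^β)(ξ) if ω^ρ < ω^β; equals ξ if ω^ρ = ω^β; and equals L(ω^ρ)(ξ) if ω^ρ > ω^β. -/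
open Ordinal

/-- `e` is the normal function enumerating `{0} ∪ { ω^(1+α) : α an ordinal }`. -/
noncomputable def eFun : Ordinal → Ordinal :=
  enumOrd ({0} ∪ { x : Ordinal | ∃ α : Ordinal, x = ω ^ (1 + α) })

/-- `ell` is the end-logarithm: `ell 0 = 0` and, for `α > 0`, `ell α` is the (unique)
exponent of the last term of the Cantor normal form of `α`, i.e. `α = γ + ω ^ ell α`
for some `γ`. -/
def IsEndLog (ell : Ordinal → Ordinal) : Prop :=
  ell 0 = 0 ∧ ∀ α : Ordinal, 0 < α → ∃ γ : Ordinal, α = γ + ω ^ ell α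


open Set

theorem oltsucc (a : Ordinal) : a < a + 1 := by
  rw [Ordinal.add_one_eq_succ]; exact Order.lt_succ a

theorem oltsucc_iff {a b : Ordinal} : a < b + 1 ↔ a ≤ b := by
  rw [Ordinal.add_one_eq_succ]; exact Order.lt_succ_iff

noncomputable section

/-- explicit form of the function `e`. -/
def gE (x : Ordinal) : Ordinal := if x = 0 then 0 else ω ^ x

theorem opow_eq_add_opow {d b₁ b₂ : Ordinal} (h : ω ^ b₁ = d + ω ^ b₂) : b₁ = b₂ := by
  rcases lt_trichotomy b₁ b₂ with hlt | he | hgt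
  · exfalso
    have h1 : ω ^ b₂ ≤ ω ^ b₁ := h ▸ le_add_self
    exact absurd ((opow_lt_opow_iff_right one_lt_omega0).2 hlt) (not_lt.2 h1)
  · exact he
  · exfalso
    have hd : d < ω ^ b₁ := by
      rcases lt_or_ge d (ω ^ b₁) with h' | h'
      · exact h'
      · exfalso
        have hdd : d ≤ d + ω ^ b₂ := le_self_add
        rw [← h] at hdd
        have : d = ω ^ b₁ := le_antisymm hdd h'
        rw [this] at h
        nth_rewrite 1 [← add_zero (ω ^ b₁)] at h
        have := (add_right_inj _).1 h
        exact (opow_ne_zero b₂ omega0_ne_zero) this.symm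
    have h2 : d + ω ^ b₂ < ω ^ b₁ :=
      principal_add_omega0_opow b₁ hd ((opow_lt_opow_iff_right one_lt_omega0).2 hgt)
    rw [← h] at h2
    exact lt_irrefl _ h2

/-- uniqueness of the end-exponent. -/
theorem endlog_unique {g₁ g₂ b₁ b₂ : Ordinal} (h : g₁ + ω ^ b₁ = g₂ + ω ^ b₂) : b₁ = b₂ := by
  rcases lt_trichotomy g₁ g₂ with hlt | he | hgt
  · have hg : g₁ + (g₂ - g₁) = g₂ := Ordinal.add_sub_cancel_of_le hlt.le
    rw [← hg, add_assoc] at h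
    exact opow_eq_add_opow ((add_right_inj _).1 h)
  · subst he
    exact opow_eq_add_opow (show ω ^ b₁ = 0 + ω ^ b₂ by rw [zero_add]; exact (add_right_inj _).1 h)
  · have hg : g₂ + (g₁ - g₂) = g₁ := Ordinal.add_sub_cancel_of_le hgt.le
    rw [← hg, add_assoc] at h
    exact (opow_eq_add_opow ((add_right_inj _).1 h.symm)).symm

/-- canonical end-logarithm -/
def ell0 (α : Ordinal) : Ordinal :=
  if h : α = 0 then 0
  else
    if α % ω ^ (log ω α) = 0 then log ω α
    else ell0 (α % ω ^ (log ω α))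
termination_by α
decreasing_by
  exact lt_of_lt_of_le (Ordinal.mod_lt α (opow_ne_zero _ omega0_ne_zero))
    (opow_log_le_self ω h)

theorem ell0_zero : ell0 0 = 0 := by rw [ell0]; simp

theorem ell0_spec : ∀ α : Ordinal, α ≠ 0 → ∃ γ, α = γ + ω ^ ell0 α := by
  intro α
  induction α using Ordinal.induction with
  | h α IH =>
    intro hα
    have hdm : ω ^ log ω α * (α / ω ^ log ω α) + α % ω ^ log ω α = α :=
      Ordinal.div_add_mod α (ω ^ log ω α)
    by_cases hr : α % ω ^ (log ω α) = 0
    · rw [ell0, dif_neg hα, if_pos hr]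
      set e := log ω α
      set q := α / ω ^ e with hq
      have hα2 : ω ^ e * q = α := by rw [← hdm, hr, add_zero]
      have hqω : q < ω := by
        rw [hq, Ordinal.div_lt (opow_ne_zero _ omega0_ne_zero), ← opow_succ]
        exact lt_opow_succ_log_self one_lt_omega0 α
      have hq0 : q ≠ 0 := by
        intro h0
        rw [h0, mul_zero] at hα2
        exact hα hα2.symm
      obtain ⟨n, hn⟩ := lt_omega0.1 hqω
      rw [hn] at hα2
      obtain ⟨m, hm⟩ := Nat.exists_eq_succ_of_ne_zero
        (show n ≠ 0 by rintro rfl; rw [Nat.cast_zero, mul_zero] at hα2; exact hα hα2.symm)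
      rw [hm] at hα2
      refine ⟨ω ^ e * m, ?_⟩
      rw [← hα2]
      push_cast
      rw [mul_add, mul_one]
    · rw [ell0, dif_neg hα, if_neg hr]
      have hlt : α % ω ^ (log ω α) < α :=
        lt_of_lt_of_le (Ordinal.mod_lt α (opow_ne_zero _ omega0_ne_zero))
          (opow_log_le_self ω hα)
      obtain ⟨γ', hγ'⟩ := IH _ hlt hr
      refine ⟨ω ^ log ω α * (α / ω ^ log ω α) + γ', ?_⟩
      rw [add_assoc, ← hγ', hdm]

theorem ell0_add_opow (γ v : Ordinal) : ell0 (γ + ω ^ v) = v := by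
  have hne : γ + ω ^ v ≠ 0 := by
    intro h
    have := opow_pos v omega0_pos
    have h2 : ω ^ v ≤ γ + ω ^ v := le_add_self
    rw [h] at h2
    exact absurd (le_antisymm h2 (zero_le)) (ne_of_gt this)
  obtain ⟨γ'', h''⟩ := ell0_spec _ hne
  exact (endlog_unique h'').symm

theorem ell0_le (α : Ordinal) : ell0 α ≤ α := by
  by_cases hα : α = 0
  · subst hα; rw [ell0_zero]
  obtain ⟨γ, hγ⟩ := ell0_spec α hα
  calc ell0 α ≤ ω ^ ell0 α := right_le_opow _ one_lt_omega0
    _ ≤ γ + ω ^ ell0 α := le_add_self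
    _ = α := hγ.symm

theorem ell0_eq_self {α : Ordinal} (h : ell0 α = α) : α = 0 ∨ ω ^ α = α := by
  by_cases hα : α = 0
  · exact Or.inl hα
  · right
    obtain ⟨γ, hγ⟩ := ell0_spec α hα
    rw [h] at hγ
    have h1 : ω ^ α ≤ α := le_trans (le_add_self) hγ.symm.le
    exact le_antisymm h1 (right_le_opow _ one_lt_omega0)


def Sset : Set Ordinal := {0} ∪ { x : Ordinal | ∃ α : Ordinal, x = ω ^ (1 + α) }

theorem Sset_unbounded : ¬ BddAbove Sset := by
  rw [not_bddAbove_iff]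
  intro a
  refine ⟨ω ^ (1 + (a + 1)), Or.inr ⟨a + 1, rfl⟩, ?_⟩
  calc a < a + 1 := oltsucc a
    _ ≤ ω ^ (a + 1) := right_le_opow _ one_lt_omega0
    _ ≤ ω ^ (1 + (a + 1)) := opow_le_opow_right omega0_pos (le_add_self)

theorem gE_strictMono : StrictMono gE := by
  intro x y hxy
  unfold gE
  rcases eq_or_ne x 0 with rfl | hx
  · rw [if_pos rfl, if_neg (ne_of_gt hxy)]
    exact opow_pos _ omega0_pos
  · rw [if_neg hx, if_neg (by exact ne_of_gt (lt_trans (pos_iff_ne_zero.2 hx) hxy))]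
    exact (opow_lt_opow_iff_right one_lt_omega0).2 hxy

theorem gE_range : range gE = Sset := by
  ext b
  constructor
  · rintro ⟨x, rfl⟩
    rcases eq_or_ne x 0 with rfl | hx
    · exact Or.inl (by simp [gE])
    · refine Or.inr ⟨x - 1, ?_⟩
      have h1 : (1 : Ordinal) ≤ x := Ordinal.one_le_iff_ne_zero.2 hx
      rw [gE, if_neg hx, Ordinal.add_sub_cancel_of_le h1]
  · rintro (rfl | ⟨α, rfl⟩)
    · exact ⟨0, by simp [gE]⟩
    · refine ⟨1 + α, ?_⟩
      rw [gE, if_neg ?_]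
      intro h
      have : (1 : Ordinal) ≤ 1 + α := le_self_add
      rw [h] at this
      exact absurd this (by norm_num)

theorem eFun_eq_gE : eFun = gE := by
  have := (eq_enumOrd gE Sset_unbounded).2 ⟨gE_strictMono, gE_range⟩
  exact this

theorem gE_zero : gE 0 = 0 := by simp [gE]

theorem gE_normal : Order.IsNormal gE := by
  rw [Order.isNormal_iff]
  refine ⟨gE_strictMono, fun o ho a hb => ?_⟩
  rw [gE, if_neg (show o ≠ 0 from ho.ne_bot)]
  rw [(isNormal_opow one_lt_omega0).le_iff_forall_le ho]
  intro b hbo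
  calc ω ^ b ≤ ω ^ (b + 1) := opow_le_opow_right omega0_pos (oltsucc b).le
    _ = gE (b + 1) := by
        rw [gE, if_neg (by exact ne_of_gt (lt_of_le_of_lt (zero_le) (oltsucc b)))]
    _ ≤ a := hb _ (by rw [Ordinal.add_one_eq_succ]; exact ho.succ_lt hbo)

theorem ell0_gE (x : Ordinal) : ell0 (gE x) = x := by
  rcases eq_or_ne x 0 with rfl | hx
  · rw [gE_zero, ell0_zero]
  · rw [gE, if_neg hx, ← zero_add (ω ^ x), ell0_add_opow]

/-- any initial function is dominated by the identity -/
theorem IsInitialFun.le_self {f : Ordinal → Ordinal} (hf : IsInitialFun f) (α : Ordinal) :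
    f α ≤ α := by
  induction α using Ordinal.induction with
  | h α IH =>
    obtain ⟨g, hg⟩ := hf (α + 1)
    have hmem : f α ∈ Iio g := by
      rw [← hg]; exact ⟨α, oltsucc α, rfl⟩
    by_contra hlt
    push_neg at hlt
    have hsucc : α + 1 ≤ f α := by
      rw [Ordinal.add_one_eq_succ]; exact Order.succ_le_of_lt hlt
    have h1 : (α + 1 : Ordinal) ∈ Iio g := lt_of_le_of_lt hsucc hmem
    have h0 : (α : Ordinal) ∈ Iio g := lt_trans (oltsucc α) h1
    rw [← hg] at h1 h0
    obtain ⟨β₁, hβ₁, hfβ₁⟩ := h1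
    obtain ⟨β₂, hβ₂, hfβ₂⟩ := h0
    rw [mem_Iio, oltsucc_iff] at hβ₁ hβ₂
    rcases lt_or_eq_of_le hβ₁ with h' | heq1
    · have h2 : α + 1 ≤ β₁ := by rw [← hfβ₁]; exact IH _ h'
      exact lt_irrefl α ((oltsucc α).trans (lt_of_le_of_lt h2 h'))
    · rcases lt_or_eq_of_le hβ₂ with h'' | heq2
      · have h2 : α ≤ β₂ := by rw [← hfβ₂]; exact IH _ h''
        exact lt_irrefl α (lt_of_le_of_lt h2 h'')
      · rw [heq1] at hfβ₁
        rw [heq2] at hfβ₂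
        rw [hfβ₂] at hfβ₁
        exact absurd hfβ₁ (ne_of_lt (oltsucc α))

theorem IsInitialFun.id : IsInitialFun (fun x => x) := fun β => ⟨β, by simp⟩

theorem IsInitialFun.comp {f g : Ordinal → Ordinal} (hf : IsInitialFun f)
    (hg : IsInitialFun g) : IsInitialFun (f ∘ g) := by
  intro β
  obtain ⟨γ, hγ⟩ := hg β
  obtain ⟨δ, hδ⟩ := hf γ
  exact ⟨δ, by rw [image_comp, hγ, hδ]⟩

/-- downward-closed bounded sets of ordinals are initial segments -/
theorem dc_eq_Iio {U : Set Ordinal} (hb : ∃ b, ∀ x ∈ U, x < b)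
    (hdc : ∀ x ∈ U, ∀ y ≤ x, y ∈ U) : ∃ g, U = Iio g := by
  obtain ⟨b, hbb⟩ := hb
  have hne : Uᶜ.Nonempty := ⟨b, fun hbU => lt_irrefl b (hbb b hbU)⟩
  refine ⟨sInf Uᶜ, ?_⟩
  ext x
  constructor
  · intro hx
    by_contra hge
    rw [mem_Iio, not_lt] at hge
    exact (csInf_mem hne) (hdc x hx _ hge)
  · intro hx
    by_contra hxU
    exact absurd (csInf_le' (show x ∈ Uᶜ from hxU)) (not_le.2 hx)

theorem ell0_initial : IsInitialFun ell0 := by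
  intro β
  apply dc_eq_Iio
  · refine ⟨β, ?_⟩
    rintro x ⟨α, hα, rfl⟩
    exact lt_of_le_of_lt (ell0_le α) hα
  · rintro x ⟨α, hα, rfl⟩ y hy
    rcases eq_or_ne α 0 with rfl | hα0
    · rw [ell0_zero] at hy
      have : y = 0 := le_antisymm hy (zero_le)
      exact ⟨0, hα, by rw [this, ell0_zero]⟩
    · obtain ⟨γ, hγ⟩ := ell0_spec α hα0
      refine ⟨γ + ω ^ y, ?_, ell0_add_opow γ y⟩
      calc γ + ω ^ y ≤ γ + ω ^ ell0 α :=
            (add_le_add_iff_left γ).2 (opow_le_opow_right omega0_pos hy)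
        _ = α := hγ.symm
        _ < β := hα

theorem isEndLog_eq_ell0 {f : Ordinal → Ordinal} (hf : IsEndLog f) : f = ell0 := by
  funext α
  rcases eq_or_ne α 0 with rfl | hα
  · rw [hf.1, ell0_zero]
  · obtain ⟨γ₁, h₁⟩ := hf.2 α (pos_iff_ne_zero.2 hα)
    obtain ⟨γ₂, h₂⟩ := ell0_spec α hα
    exact endlog_unique (h₁ ▸ h₂ ▸ rfl : γ₁ + ω ^ f α = γ₂ + ω ^ ell0 α)

/-! ### The pieces `P γ = E (ω^γ)` of the minimal hyperation -/

universe u v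

def P : Ordinal.{v} → Ordinal.{u} → Ordinal.{u}
  | γ => if γ = 0 then gE else enumOrd {α | ∀ a < γ, P a α = α}
termination_by γ => γ
decreasing_by exact ‹_ < _›

def Cset (γ : Ordinal.{v}) : Set Ordinal.{u} := {α | ∀ a < γ, P a α = α}

theorem P_zero : P (0 : Ordinal.{v}) = gE.{u} := by rw [P]; simp

theorem P_pos {γ : Ordinal.{v}} (hγ : γ ≠ 0) : P γ = enumOrd (Cset.{u, v} γ) := by
  rw [P, if_neg hγ]; rfl

theorem P_zero_fixed : ∀ γ : Ordinal.{v}, P γ (0 : Ordinal.{u}) = 0 := by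
  intro γ
  induction γ using Ordinal.induction with
  | h γ IH =>
    rcases eq_or_ne γ 0 with rfl | hγ
    · rw [P_zero, gE_zero]
    · rw [P_pos hγ, enumOrd_zero]
      refine le_antisymm (csInf_le' ?_) (zero_le)
      exact fun a ha => IH a ha

theorem Cset_zero_mem (γ : Ordinal.{v}) : (0 : Ordinal.{u}) ∈ Cset γ :=
  fun a _ => P_zero_fixed a

theorem Cset_antitone {b γ : Ordinal.{v}} (h : b ≤ γ) : Cset.{u, v} γ ⊆ Cset b :=
  fun _ hα a ha => hα a (lt_of_lt_of_le ha h)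

theorem Cset_closed {γ : Ordinal.{v}} (hn : ∀ a < γ, Order.IsNormal (P.{u, v} a)) :
    IsClosed (Cset.{u, v} γ) := by
  rw [isClosed_iff_iSup]
  intro ι hι f hf
  haveI := hι
  by_cases hb : BddAbove (range f)
  · intro a ha
    rw [(hn a ha).map_iSup hb]
    exact iSup_congr fun i => hf i a ha
  · have h0 : ⨆ i, f i = 0 := by
      rw [show (⨆ i, f i) = sSup (range f) from rfl, csSup_of_not_bddAbove hb, csSup_empty]
      rfl
    rw [h0]
    exact Cset_zero_mem γ

theorem P_normal_below :
    ∀ γ : Ordinal.{v}, (∀ a ≤ γ, ¬ BddAbove (Cset.{u, v} a)) → Order.IsNormal (P.{u, v} γ) := by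
  intro γ
  induction γ using Ordinal.induction with
  | h γ IH =>
    intro hOk
    rcases eq_or_ne γ 0 with rfl | hγ
    · rw [P_zero]; exact gE_normal
    · rw [P_pos hγ]
      exact (enumOrd_isNormal_iff_isClosed (hOk γ le_rfl)).2
        (Cset_closed fun a ha => IH a ha fun b hb => hOk b (le_trans hb ha.le))

theorem P_min_below {γ : Ordinal.{v}} (hOkle : ∀ a ≤ γ, ¬ BddAbove (Cset.{u, v} a))
    {f : Ordinal.{u} → Ordinal.{u}} (hf : StrictMono f)
    (hfix : ∀ x, f x ∈ Cset γ) (hγ : γ ≠ 0) : ∀ x, P γ x ≤ f x := by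
  intro x
  induction x using Ordinal.induction with
  | h x IH =>
    obtain ⟨u', hu'⟩ := enumOrd_surjective (hOkle γ le_rfl) (hfix x)
    have hu : P γ u' = f x := by rw [P_pos hγ]; exact hu'
    have hxu : x ≤ u' := by
      by_contra hux
      push_neg at hux
      have h1 : P γ u' ≤ f u' := IH u' hux
      rw [hu] at h1
      exact absurd (hf hux) (not_lt.2 h1)
    calc P γ x ≤ P γ u' := (P_normal_below γ hOkle).monotone hxu
      _ = f x := hu

/-- the statement that all the clubs `Cset γ` are unbounded -/
def OkP : Prop := ∀ γ : Ordinal.{v}, ¬ BddAbove (Cset.{u, v} γ)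

/-- any weak hyperation of `e` witnesses unboundedness of all the clubs,
and dominates the `P γ` -/
theorem okAll {E : Ordinal.{v} → Ordinal.{u} → Ordinal.{u}} (hE : IsWeakHyperation eFun E) :
    ∀ γ : Ordinal.{v}, (¬ BddAbove (Cset.{u, v} γ)) ∧ ∀ z, P γ z ≤ E (ω ^ γ) z := by
  intro γ
  induction γ using Ordinal.induction with
  | h γ IH =>
    rcases eq_or_ne γ 0 with rfl | hγ
    · constructor
      · rw [not_bddAbove_iff]
        intro x
        exact ⟨x + 1, fun a ha => (not_lt_of_ge (zero_le) ha).elim, oltsucc x⟩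
      · intro z
        rw [P_zero, opow_zero, hE.2.2.1, eFun_eq_gE]
    · have hmem : ∀ z, E (ω ^ γ) z ∈ Cset γ := by
        intro z a ha
        have h1 : ω ^ a + ω ^ γ = ω ^ γ :=
          add_absorp ((opow_lt_opow_iff_right one_lt_omega0).2 ha) le_rfl
        have h2 : E (ω ^ a) (E (ω ^ γ) z) = E (ω ^ γ) z := by
          have h3 := congrFun (hE.2.2.2 (ω ^ a) (ω ^ γ)) z
          rw [h1] at h3
          exact h3.symm
        refine le_antisymm ?_
          (P_normal_below a fun b hb => (IH b (lt_of_le_of_lt hb ha)).1).strictMono.le_apply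
        calc P a (E (ω ^ γ) z) ≤ E (ω ^ a) (E (ω ^ γ) z) := (IH a ha).2 _
          _ = E (ω ^ γ) z := h2
      have hOkγ : ¬ BddAbove (Cset γ) := by
        rw [not_bddAbove_iff]
        intro x
        exact ⟨E (ω ^ γ) (x + 1), hmem (x + 1),
          lt_of_lt_of_le (oltsucc x) (hE.1 (ω ^ γ)).strictMono.le_apply⟩
      refine ⟨hOkγ, ?_⟩
      refine P_min_below (fun a ha => ?_) (hE.1 (ω ^ γ)).strictMono hmem hγ
      rcases lt_or_eq_of_le ha with h | h
      · exact (IH a h).1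
      · exact h ▸ hOkγ

theorem P_normal (hOk : OkP.{u, v}) (γ : Ordinal.{v}) : Order.IsNormal (P.{u, v} γ) :=
  P_normal_below γ fun a _ => hOk a

theorem P_mem_Cset (hOk : OkP.{u, v}) {γ : Ordinal.{v}} (hγ : γ ≠ 0) (x : Ordinal.{u}) :
    P γ x ∈ Cset γ := by
  rw [P_pos hγ]
  exact enumOrd_mem (hOk γ) x

theorem P_fp (hOk : OkP.{u, v}) {a γ : Ordinal.{v}} (h : a < γ) (x : Ordinal.{u}) :
    P a (P γ x) = P γ x :=
  P_mem_Cset hOk (fun h0 => (not_lt_of_ge (zero_le) (h0 ▸ h)).elim) x a h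

theorem mem_Cset_iff_range (hOk : OkP.{u, v}) {γ : Ordinal.{v}} {α : Ordinal.{u}}
    (hγ : γ ≠ 0) : α ∈ Cset γ ↔ ∃ x, P γ x = α := by
  constructor
  · intro h
    obtain ⟨x, hx⟩ := enumOrd_surjective (hOk γ) h
    exact ⟨x, by rw [P_pos hγ]; exact hx⟩
  · rintro ⟨x, rfl⟩
    exact P_mem_Cset hOk hγ x

theorem P_min (hOk : OkP.{u, v}) {γ : Ordinal.{v}} {f : Ordinal.{u} → Ordinal.{u}}
    (hf : StrictMono f) (hfix : ∀ x, f x ∈ Cset γ) (hγ : γ ≠ 0) : ∀ x, P γ x ≤ f x :=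
  P_min_below (fun a _ => hOk a) hf hfix hγ

def invP (γ : Ordinal.{v}) (ζ : Ordinal.{u}) : Ordinal.{u} := sInf {x | ζ ≤ P γ x}

theorem invP_P (hOk : OkP.{u, v}) (γ : Ordinal.{v}) (x : Ordinal.{u}) :
    invP γ (P γ x) = x := by
  apply le_antisymm
  · exact csInf_le' (by simp)
  · exact le_csInf ⟨x, by simp⟩ fun y hy => (P_normal hOk γ).strictMono.le_iff_le.1 hy

theorem P_invP (hOk : OkP.{u, v}) {γ : Ordinal.{v}} {α : Ordinal.{u}} (hγ : γ ≠ 0)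
    (hα : α ∈ Cset γ) : P γ (invP γ α) = α := by
  obtain ⟨x, rfl⟩ := (mem_Cset_iff_range hOk hγ).1 hα
  rw [invP_P hOk]

/-! ### The minimal hyperation `E0` -/

theorem omega_opow_add_eq {e x : Ordinal} (h : ω ^ e + x = x) : ω ^ (e + 1) ≤ x := by
  have hn : ∀ n : ℕ, ω ^ e * n + x = x := by
    intro n
    induction n with
    | zero => simp
    | succ m ih =>
      push_cast
      rw [mul_add, mul_one, add_assoc, h, ih]
  rw [add_one_eq_succ, opow_succ, mul_le_iff_of_isSuccLimit isSuccLimit_omega0]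
  intro b' hb'
  obtain ⟨n, rfl⟩ := lt_omega0.1 hb'
  calc ω ^ e * n ≤ ω ^ e * n + x := le_self_add
    _ = x := hn n

theorem sub_opow_log_lt {ξ : Ordinal} (h : ξ ≠ 0) : ξ - ω ^ log ω ξ < ξ := by
  have hr : ξ - ω ^ log ω ξ ≤ ξ := Ordinal.sub_le_self _ _
  rcases lt_or_eq_of_le hr with h' | heq
  · exact h'
  · exfalso
    have hc : ω ^ log ω ξ + ξ = ξ := by
      have hc' := Ordinal.add_sub_cancel_of_le (opow_log_le_self ω h)
      rw [heq] at hc'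
      exact hc'
    have := omega_opow_add_eq hc
    rw [add_one_eq_succ] at this
    exact absurd (lt_opow_succ_log_self one_lt_omega0 ξ) (not_lt.2 this)

def E0 (ξ : Ordinal.{v}) : Ordinal.{u} → Ordinal.{u} :=
  if h : ξ = 0 then id else P (log ω ξ) ∘ E0 (ξ - ω ^ log ω ξ)
termination_by ξ
decreasing_by exact sub_opow_log_lt h

theorem E0_zero : E0 0 = id := by rw [E0]; simp

theorem E0_pos {ξ : Ordinal} (h : ξ ≠ 0) :
    E0 ξ = P (log ω ξ) ∘ E0 (ξ - ω ^ log ω ξ) := by rw [E0]; simp [h]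

theorem E0_opow (γ : Ordinal) : E0 (ω ^ γ) = P γ := by
  rw [E0_pos (opow_ne_zero _ omega0_ne_zero), log_opow one_lt_omega0, Ordinal.sub_self,
    E0_zero, Function.comp_id]

theorem E0_one : E0 1 = gE := by
  rw [← opow_zero ω, E0_opow, P_zero]

theorem E0_normal (hOk : OkP.{u, v}) (ξ : Ordinal.{v}) : Order.IsNormal (E0.{u, v} ξ) := by
  induction ξ using Ordinal.induction with
  | h ξ IH =>
    rcases eq_or_ne ξ 0 with rfl | hξ
    · rw [E0_zero]; exact Order.IsNormal.id
    · rw [E0_pos hξ]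
      exact (P_normal hOk _).comp (IH _ (sub_opow_log_lt hξ))

theorem E0_fix {d : Ordinal} : ∀ {ξ}, ξ < ω ^ d → ∀ {y}, y ∈ Cset d → E0 ξ y = y := by
  intro ξ
  induction ξ using Ordinal.induction with
  | h ξ IH =>
    intro hξ y hy
    rcases eq_or_ne ξ 0 with rfl | hξ0
    · rw [E0_zero]; rfl
    · rw [E0_pos hξ0]
      have hrlt : ξ - ω ^ log ω ξ < ξ := sub_opow_log_lt hξ0
      have h1 : E0 (ξ - ω ^ log ω ξ) y = y := IH _ hrlt (lt_trans hrlt hξ) hy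
      have hed : log ω ξ < d := by
        have h2 : ω ^ log ω ξ < ω ^ d := lt_of_le_of_lt (opow_log_le_self ω hξ0) hξ
        exact (opow_lt_opow_iff_right one_lt_omega0).1 h2
      show P (log ω ξ) (E0 (ξ - ω ^ log ω ξ) y) = y
      rw [h1]
      exact hy _ hed

theorem log_eq_of {e x : Ordinal} (h1 : ω ^ e ≤ x) (h2 : x < ω ^ (e + 1)) : log ω x = e := by
  have hx : x ≠ 0 := fun h0 => by
    rw [h0] at h1
    exact absurd h1 (not_le.2 (opow_pos _ omega0_pos))
  have h3 : ¬ (e + 1 ≤ log ω x) := fun hc =>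
    absurd ((opow_le_iff_le_log one_lt_omega0 hx).2 hc) (not_le.2 h2)
  exact le_antisymm (oltsucc_iff.1 (not_le.1 h3)) ((opow_le_iff_le_log one_lt_omega0 hx).1 h1)

theorem E0_add (hOk : OkP.{u, v}) : ∀ a b : Ordinal.{v}, E0.{u, v} (a + b) = E0 a ∘ E0 b := by
  intro a
  induction a using Ordinal.induction with
  | h a IH =>
    intro b
    rcases eq_or_ne a 0 with rfl | ha
    · rw [zero_add, E0_zero]; rfl
    have ha1 : ω ^ log ω a ≤ a := opow_log_le_self ω ha
    have ha2 : a < ω ^ (log ω a + 1) := by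
      rw [add_one_eq_succ]; exact lt_opow_succ_log_self one_lt_omega0 a
    have hra : ω ^ log ω a + (a - ω ^ log ω a) = a := Ordinal.add_sub_cancel_of_le ha1
    have hrlt : a - ω ^ log ω a < a := sub_opow_log_lt ha
    by_cases hb : b < ω ^ (log ω a + 1)
    · have hab1 : ω ^ log ω a ≤ a + b := le_trans ha1 (le_self_add)
      have hab2 : a + b < ω ^ (log ω a + 1) := principal_add_omega0_opow _ ha2 hb
      have hab0 : a + b ≠ 0 := fun h0 => ha (by
        have : a ≤ a + b := le_self_add
        rw [h0] at this
        exact le_antisymm this (zero_le))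
      have hlog : log ω (a + b) = log ω a := log_eq_of hab1 hab2
      have hsub : (a + b) - ω ^ log ω a = (a - ω ^ log ω a) + b := by
        nth_rewrite 1 [← hra]
        rw [add_assoc, Ordinal.add_sub_cancel]
      rw [E0_pos hab0, hlog, hsub, IH _ hrlt b, E0_pos ha]
      rfl
    · push_neg at hb
      have hab : a + b = b := add_absorp ha2 hb
      rw [hab]
      funext z
      have hb0 : b ≠ 0 := fun h0 => by
        rw [h0] at hb
        exact absurd hb (not_le.2 (opow_pos _ omega0_pos))
      have hd : log ω a + 1 ≤ log ω b := (opow_le_iff_le_log one_lt_omega0 hb0).1 hb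
      have hd0 : log ω b ≠ 0 := fun h0 => by
        rw [h0] at hd
        exact absurd hd (by
          intro hc
          have : (1 : Ordinal) ≤ 0 := le_trans ((le_add_self : (1:Ordinal) ≤ log ω a + 1)) hc
          simp at this)
      have hmem : E0 b z ∈ Cset (log ω b) := by
        rw [E0_pos hb0]
        exact P_mem_Cset hOk hd0 _
      have halt : a < ω ^ log ω b :=
        lt_of_lt_of_le ha2 (opow_le_opow_right omega0_pos hd)
      exact (E0_fix halt hmem).symm

theorem E0_weak (hOk : OkP.{u, v}) : IsWeakHyperation eFun E0.{u, v} :=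
  ⟨E0_normal hOk, E0_zero, by rw [E0_one, eFun_eq_gE], E0_add hOk⟩

theorem E0_min (hOk : OkP.{u, v}) {F : Ordinal.{v} → Ordinal.{u} → Ordinal.{u}}
    (hF : IsWeakHyperation eFun F) :
    ∀ (ξ : Ordinal.{v}) (ζ : Ordinal.{u}), E0 ξ ζ ≤ F ξ ζ := by
  intro ξ
  induction ξ using Ordinal.induction with
  | h ξ IH =>
    intro ζ
    rcases eq_or_ne ξ 0 with rfl | hξ
    · rw [E0_zero, hF.2.1]
    have ha1 : ω ^ log ω ξ ≤ ξ := opow_log_le_self ω hξ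
    have hra : ω ^ log ω ξ + (ξ - ω ^ log ω ξ) = ξ := Ordinal.add_sub_cancel_of_le ha1
    have hrlt : ξ - ω ^ log ω ξ < ξ := sub_opow_log_lt hξ
    rcases eq_or_ne (ξ - ω ^ log ω ξ) 0 with hr0 | hr0
    · -- ξ = ω ^ e is additively indecomposable
      have hξe : ω ^ log ω ξ = ξ := by conv_rhs => rw [← hra, hr0, add_zero]
      rcases eq_or_ne (log ω ξ) 0 with he0 | he0
      · have : ξ = 1 := by rw [← hξe, he0, opow_zero]
        subst this
        rw [hF.2.2.1, eFun_eq_gE, E0_one]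
      · have hE0 : E0 ξ = P (log ω ξ) := by
          rw [E0_pos hξ, hr0, E0_zero, Function.comp_id]
        rw [hE0]
        refine P_min hOk (hF.1 ξ).strictMono ?_ he0 ζ
        intro z a ha
        have hpow : ω ^ a < ω ^ log ω ξ := (opow_lt_opow_iff_right one_lt_omega0).2 ha
        have h1 : ω ^ a + ξ = ξ := add_absorp hpow ha1
        have h2 : F (ω ^ a) (F ξ z) = F ξ z := by
          have := congrFun (hF.2.2.2 (ω ^ a) ξ) z
          rw [h1] at this
          exact this.symm
        have h4 : E0 (ω ^ a) (F ξ z) ≤ F (ω ^ a) (F ξ z) := IH _ (lt_of_lt_of_le hpow ha1) _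
        rw [E0_opow] at h4
        exact le_antisymm (le_trans h4 (le_of_eq h2)) (P_normal hOk a).strictMono.le_apply
    · -- decomposable
      have hωlt : ω ^ log ω ξ < ξ := by
        rcases lt_or_eq_of_le ha1 with h' | h'
        · exact h'
        · exact absurd (show ξ - ω ^ log ω ξ = 0 by rw [h']; exact Ordinal.sub_self ξ) hr0
      calc E0 ξ ζ = P (log ω ξ) (E0 (ξ - ω ^ log ω ξ) ζ) := by rw [E0_pos hξ]; rfl
        _ = E0 (ω ^ log ω ξ) (E0 (ξ - ω ^ log ω ξ) ζ) := by rw [E0_opow]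
        _ ≤ E0 (ω ^ log ω ξ) (F (ξ - ω ^ log ω ξ) ζ) :=
            (E0_normal hOk _).monotone (IH _ hrlt ζ)
        _ ≤ F (ω ^ log ω ξ) (F (ξ - ω ^ log ω ξ) ζ) := IH _ hωlt _
        _ = F ξ ζ := by
            have := congrFun (hF.2.2.2 (ω ^ log ω ξ) (ξ - ω ^ log ω ξ)) ζ
            rw [hra] at this
            exact this.symm

/-! ### The pieces `Q γ = L (ω^γ)` of the maximal cohyperation -/

open scoped Classical

def pick (γ : Ordinal.{v}) (ζ : Ordinal.{u}) : Ordinal.{v} := sInf {a | a < γ ∧ P a ζ ≠ ζ}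

theorem pick_spec {γ ζ : Ordinal} (h : ζ ∉ Cset γ) :
    pick γ ζ < γ ∧ P (pick γ ζ) ζ ≠ ζ := by
  have hne : {a | a < γ ∧ P a ζ ≠ ζ}.Nonempty := by
    have h2 : ¬ ∀ a < γ, P a ζ = ζ := h
    push_neg at h2
    obtain ⟨a, ha, hne⟩ := h2
    exact ⟨a, ha, hne⟩
  exact csInf_mem hne

def Q (γ : Ordinal.{v}) (ζ : Ordinal.{u}) : Ordinal.{u} :=
  if γ = 0 then ell0 ζ
  else if ζ ∈ Cset γ then invP γ ζ
  else
    if h' : Q (pick γ ζ) ζ < ζ then Q γ (Q (pick γ ζ) ζ) else 0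
termination_by (γ, ζ)
decreasing_by
  all_goals first
    | exact Prod.Lex.right _ h'
    | exact Prod.Lex.left _ _ (pick_spec ‹_›).1

theorem Q_zero (ζ : Ordinal) : Q 0 ζ = ell0 ζ := by rw [Q]; simp

theorem Q_inC {γ ζ : Ordinal} (hγ : γ ≠ 0) (hc : ζ ∈ Cset γ) : Q γ ζ = invP γ ζ := by
  rw [Q]; simp [hγ, hc]

theorem Q_notC' {γ ζ : Ordinal} (hγ : γ ≠ 0) (hc : ζ ∉ Cset γ)
    (h' : Q (pick γ ζ) ζ < ζ) : Q γ ζ = Q γ (Q (pick γ ζ) ζ) := by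
  rw [Q]; simp [hγ, hc, h']

theorem Q_notC0 {γ ζ : Ordinal} (hγ : γ ≠ 0) (hc : ζ ∉ Cset γ)
    (h' : ¬ Q (pick γ ζ) ζ < ζ) : Q γ ζ = 0 := by
  rw [Q]; simp [hγ, hc, h']

theorem Q_le (hOk : OkP.{u, v}) : ∀ (γ : Ordinal.{v}) (ζ : Ordinal.{u}), Q γ ζ ≤ ζ := by
  intro γ
  induction γ using Ordinal.induction with
  | h γ IHγ =>
    intro ζ
    induction ζ using Ordinal.induction with
    | h ζ IHζ =>
      rcases eq_or_ne γ 0 with rfl | hγ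
      · rw [Q_zero]; exact ell0_le ζ
      by_cases hc : ζ ∈ Cset γ
      · rw [Q_inC hγ hc]
        calc invP γ ζ ≤ P γ (invP γ ζ) := (P_normal hOk γ).strictMono.le_apply
          _ = ζ := P_invP hOk hγ hc
      · by_cases h' : Q (pick γ ζ) ζ < ζ
        · rw [Q_notC' hγ hc h']
          exact le_trans (IHζ _ h') h'.le
        · rw [Q_notC0 hγ hc h']
          exact zero_le

theorem Q_P (hOk : OkP.{u, v}) {γ : Ordinal.{v}} (hγ : γ ≠ 0) (x : Ordinal.{u}) :
    Q γ (P γ x) = x := by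
  rw [Q_inC hγ (P_mem_Cset hOk hγ x), invP_P hOk]

theorem Q_eq_self (hOk : OkP.{u, v}) {a : Ordinal.{v}} {ζ : Ordinal.{u}} (h : Q a ζ = ζ) :
    P a ζ = ζ := by
  rcases eq_or_ne a 0 with rfl | ha
  · rw [Q_zero] at h
    rw [P_zero]
    by_cases h0 : ζ = 0
    · rw [h0, gE_zero]
    · rcases ell0_eq_self h with h1 | h2
      · exact absurd h1 h0
      · rw [gE, if_neg h0]; exact h2
  · by_cases hc : ζ ∈ Cset a
    · rw [Q_inC ha hc] at h
      have h2 := P_invP hOk ha hc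
      rw [h] at h2
      exact h2
    · exfalso
      by_cases h' : Q (pick a ζ) ζ < ζ
      · rw [Q_notC' ha hc h'] at h
        have h2 := Q_le hOk a (Q (pick a ζ) ζ)
        rw [h] at h2
        exact absurd (lt_of_le_of_lt h2 h') (lt_irrefl ζ)
      · rw [Q_notC0 ha hc h'] at h
        exact hc (by rw [← h]; exact fun b _ => P_zero_fixed b)

theorem Q_pick_lt (hOk : OkP.{u, v}) {γ : Ordinal.{v}} {ζ : Ordinal.{u}} (hc : ζ ∉ Cset γ) :
    Q (pick γ ζ) ζ < ζ := by
  rcases lt_or_eq_of_le (Q_le hOk (pick γ ζ) ζ) with h | h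
  · exact h
  · exact absurd (Q_eq_self hOk h) (pick_spec hc).2

theorem Q_step (hOk : OkP.{u, v}) {γ : Ordinal.{v}} {ζ : Ordinal.{u}} (hγ : γ ≠ 0)
    (hc : ζ ∉ Cset γ) :
    Q γ ζ = Q γ (Q (pick γ ζ) ζ) := Q_notC' hγ hc (Q_pick_lt hOk hc)

theorem Q_fix_of_mem (hOk : OkP.{u, v}) {γ b : Ordinal.{v}} {ζ : Ordinal.{u}}
    (hbγ : b < γ) (hc : ζ ∈ Cset γ) : Q b ζ = ζ := by
  rcases eq_or_ne b 0 with rfl | hb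
  · rw [Q_zero]
    have hPζ : gE ζ = ζ := by
      have := hc 0 hbγ
      rwa [P_zero] at this
    conv_lhs => rw [← hPζ]
    exact ell0_gE ζ
  · have hcb : ζ ∈ Cset b := Cset_antitone (le_of_lt hbγ) hc
    rw [Q_inC hb hcb]
    have hPb : P b ζ = ζ := hc b hbγ
    conv_lhs => rw [← hPb]
    rw [invP_P hOk]

theorem Q_absorb (hOk : OkP.{u, v}) :
    ∀ (γ : Ordinal.{v}) (ζ : Ordinal.{u}) (a : Ordinal.{v}), a < γ → Q γ (Q a ζ) = Q γ ζ := by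
  intro γ
  induction γ using Ordinal.induction with
  | h γ IHγ =>
    intro ζ
    induction ζ using Ordinal.induction with
    | h ζ IHζ =>
      intro a ha
      have hγ : γ ≠ 0 := fun h0 => (not_lt_of_ge (zero_le) (h0 ▸ ha)).elim
      rcases eq_or_ne (Q a ζ) ζ with he | hne
      · rw [he]
      by_cases hc : ζ ∈ Cset γ
      · exact absurd (Q_fix_of_mem hOk ha hc) hne
      · have hp := pick_spec hc
        have hq' : Q (pick γ ζ) ζ < ζ := Q_pick_lt hOk hc
        have hstep : Q γ ζ = Q γ (Q (pick γ ζ) ζ) := Q_step hOk hγ hc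
        have haζ : Q a ζ < ζ := lt_of_le_of_ne (Q_le hOk a ζ) hne
        rcases lt_trichotomy a (pick γ ζ) with hap | heq | hpa
        · have h1 : Q (pick γ ζ) (Q a ζ) = Q (pick γ ζ) ζ := IHγ _ hp.1 ζ a hap
          have h2 : Q γ (Q (pick γ ζ) (Q a ζ)) = Q γ (Q a ζ) := IHζ _ haζ _ hp.1
          rw [← h2, h1, ← hstep]
        · rw [← heq] at hstep
          exact hstep.symm
        · have h1 : Q a (Q (pick γ ζ) ζ) = Q a ζ := IHγ a ha ζ _ hpa
          have h2 : Q γ (Q a (Q (pick γ ζ) ζ)) = Q γ (Q (pick γ ζ) ζ) := IHζ _ hq' a ha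
          rw [← h1, h2, ← hstep]

theorem Q_collapse (hOk : OkP.{u, v}) {γ : Ordinal.{v}} (hγ : γ ≠ 0) :
    ∀ ζ : Ordinal.{u}, ∃ c, c ≤ ζ ∧ c ∈ Cset γ ∧ Q γ ζ = invP γ c := by
  intro ζ
  induction ζ using Ordinal.induction with
  | h ζ IH =>
    by_cases hc : ζ ∈ Cset γ
    · exact ⟨ζ, le_rfl, hc, Q_inC hγ hc⟩
    · have hq' : Q (pick γ ζ) ζ < ζ := Q_pick_lt hOk hc
      obtain ⟨c, hcle, hcC, hQ⟩ := IH _ hq'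
      exact ⟨c, le_trans hcle hq'.le, hcC, by rw [Q_step hOk hγ hc]; exact hQ⟩

theorem Q_initial (hOk : OkP.{u, v}) (γ : Ordinal.{v}) : IsInitialFun (Q.{u, v} γ) := by
  rcases eq_or_ne γ 0 with rfl | hγ
  · have : Q 0 = ell0 := funext fun ζ => Q_zero ζ
    rw [this]
    exact ell0_initial
  · intro β
    apply dc_eq_Iio
    · exact ⟨β, by rintro x ⟨α, hα, rfl⟩; exact lt_of_le_of_lt (Q_le hOk γ α) hα⟩
    · rintro x ⟨α, hα, rfl⟩ y hy
      obtain ⟨c, hcle, hcC, hQ⟩ := Q_collapse hOk hγ α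
      refine ⟨P γ y, ?_, Q_P hOk hγ y⟩
      have h1 : P γ y ≤ c := by
        have h2 : P γ (invP γ c) = c := P_invP hOk hγ hcC
        have h3 : y ≤ invP γ c := by rw [← hQ]; exact hy
        calc P γ y ≤ P γ (invP γ c) := (P_normal hOk γ).monotone h3
          _ = c := h2
      exact lt_of_le_of_lt (le_trans h1 hcle) hα

/-! ### The explicit weak cohyperation `hFam` -/

def hFam (ξ : Ordinal.{v}) : Ordinal.{u} → Ordinal.{u} :=
  if h : ξ = 0 then id else hFam (ξ - ω ^ log ω ξ) ∘ Q (log ω ξ)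
termination_by ξ
decreasing_by exact sub_opow_log_lt h

theorem hFam_zero : hFam 0 = id := by rw [hFam]; simp

theorem hFam_pos {ξ : Ordinal} (h : ξ ≠ 0) :
    hFam ξ = hFam (ξ - ω ^ log ω ξ) ∘ Q (log ω ξ) := by rw [hFam]; simp [h]

theorem hFam_opow (γ : Ordinal) : hFam (ω ^ γ) = Q γ := by
  rw [hFam_pos (opow_ne_zero _ omega0_ne_zero), log_opow one_lt_omega0, Ordinal.sub_self,
    hFam_zero, Function.id_comp]

theorem hFam_one : hFam 1 = ell0 := by
  rw [← opow_zero ω, hFam_opow]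
  exact funext fun ζ => Q_zero ζ

theorem Q_hFam_absorb (hOk : OkP.{u, v}) {d : Ordinal.{v}} :
    ∀ {ξ : Ordinal.{v}}, ξ < ω ^ d → ∀ ζ : Ordinal.{u}, Q d (hFam ξ ζ) = Q d ζ := by
  intro ξ
  induction ξ using Ordinal.induction with
  | h ξ IH =>
    intro hξ ζ
    rcases eq_or_ne ξ 0 with rfl | hξ0
    · rw [hFam_zero]; rfl
    · have hrlt : ξ - ω ^ log ω ξ < ξ := sub_opow_log_lt hξ0
      have hed : log ω ξ < d := by
        have h2 : ω ^ log ω ξ < ω ^ d := lt_of_le_of_lt (opow_log_le_self ω hξ0) hξ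
        exact (opow_lt_opow_iff_right one_lt_omega0).1 h2
      rw [hFam_pos hξ0]
      show Q d (hFam (ξ - ω ^ log ω ξ) (Q (log ω ξ) ζ)) = Q d ζ
      rw [IH _ hrlt (lt_trans hrlt hξ) (Q (log ω ξ) ζ)]
      exact Q_absorb hOk d ζ _ hed

theorem hFam_add (hOk : OkP.{u, v}) : ∀ a b : Ordinal.{v}, hFam.{u, v} (a + b) = hFam b ∘ hFam a := by
  intro a
  induction a using Ordinal.induction with
  | h a IH =>
    intro b
    rcases eq_or_ne a 0 with rfl | ha
    · rw [zero_add, hFam_zero, Function.comp_id]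
    have ha1 : ω ^ log ω a ≤ a := opow_log_le_self ω ha
    have ha2 : a < ω ^ (log ω a + 1) := by
      rw [add_one_eq_succ]; exact lt_opow_succ_log_self one_lt_omega0 a
    have hra : ω ^ log ω a + (a - ω ^ log ω a) = a := Ordinal.add_sub_cancel_of_le ha1
    have hrlt : a - ω ^ log ω a < a := sub_opow_log_lt ha
    by_cases hb : b < ω ^ (log ω a + 1)
    · have hab1 : ω ^ log ω a ≤ a + b := le_trans ha1 (le_self_add)
      have hab2 : a + b < ω ^ (log ω a + 1) := principal_add_omega0_opow _ ha2 hb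
      have hab0 : a + b ≠ 0 := fun h0 => ha (by
        have : a ≤ a + b := le_self_add
        rw [h0] at this
        exact le_antisymm this (zero_le))
      have hlog : log ω (a + b) = log ω a := log_eq_of hab1 hab2
      have hsub : (a + b) - ω ^ log ω a = (a - ω ^ log ω a) + b := by
        nth_rewrite 1 [← hra]
        rw [add_assoc, Ordinal.add_sub_cancel]
      rw [hFam_pos hab0, hlog, hsub, IH _ hrlt b, hFam_pos ha]
      rfl
    · push_neg at hb
      have hab : a + b = b := add_absorp ha2 hb
      rw [hab]
      funext z
      have halt : a < ω ^ log ω b := by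
        have hb0 : b ≠ 0 := fun h0 => by
          rw [h0] at hb
          exact absurd hb (not_le.2 (opow_pos _ omega0_pos))
        have hd : log ω a + 1 ≤ log ω b := (opow_le_iff_le_log one_lt_omega0 hb0).1 hb
        exact lt_of_lt_of_le ha2 (opow_le_opow_right omega0_pos hd)
      have hb0 : b ≠ 0 := fun h0 => by
        rw [h0] at hb
        exact absurd hb (not_le.2 (opow_pos _ omega0_pos))
      show hFam b z = hFam b (hFam a z)
      rw [hFam_pos hb0]
      show hFam _ (Q (log ω b) z) = hFam _ (Q (log ω b) (hFam a z))
      rw [Q_hFam_absorb hOk halt z]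

theorem hFam_initial (hOk : OkP.{u, v}) (ξ : Ordinal.{v}) : IsInitialFun (hFam.{u, v} ξ) := by
  induction ξ using Ordinal.induction with
  | h ξ IH =>
    rcases eq_or_ne ξ 0 with rfl | hξ
    · rw [hFam_zero]
      exact fun β => ⟨β, by simp⟩
    · rw [hFam_pos hξ]
      exact IsInitialFun.comp (IH _ (sub_opow_log_lt hξ)) (Q_initial hOk _)

theorem hFam_weak (hOk : OkP.{u, v}) : IsWeakCohyperation ell0 hFam.{u, v} :=
  ⟨hFam_initial hOk, hFam_zero, hFam_one, hFam_add hOk⟩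

/-! ### Key facts about the maximal cohyperation `L` -/

section Lfacts

variable {L : Ordinal.{v} → Ordinal.{u} → Ordinal.{u}}

/-- if `L η α = α` then `α` is a fixed point of `E0 η` -/
theorem Slem (hOk : OkP.{u, v}) (hL : IsCohyperation ell0 L) {Ξ : Ordinal.{v}} (hK : ∀ η < Ξ, ∀ x, L η (E0 η x) = x) :
    ∀ η < Ξ, ∀ α, L η α = α → E0 η α = α := by
  intro η
  induction η using Ordinal.induction with
  | h η IHη =>
    intro hηΞ α hLα
    rcases eq_or_ne η 0 with rfl | hη
    · rw [E0_zero]; rfl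
    have ha1 : ω ^ log ω η ≤ η := opow_log_le_self ω hη
    have hra : ω ^ log ω η + (η - ω ^ log ω η) = η := Ordinal.add_sub_cancel_of_le ha1
    have hrlt : η - ω ^ log ω η < η := sub_opow_log_lt hη
    rcases eq_or_ne (η - ω ^ log ω η) 0 with hr0 | hr0
    · -- indecomposable: η = ω ^ e
      have hηe : ω ^ log ω η = η := by conv_rhs => rw [← hra, hr0, add_zero]
      rcases eq_or_ne (log ω η) 0 with he0 | he0
      · -- η = 1
        have hη1 : η = 1 := by rw [← hηe, he0, opow_zero]
        subst hη1
        have hells : ell0 α = α := by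
          have := congrFun hL.1.2.2.1 α
          rw [hLα] at this
          exact this.symm
        rw [E0_one]
        rcases ell0_eq_self hells with rfl | h2
        · exact gE_zero
        · by_cases h0 : α = 0
          · rw [h0, gE_zero]
          · rw [gE, if_neg h0]; exact h2
      · -- η = ω ^ e, e ≠ 0
        have hfix : ∀ η' < η, L η' α = α := by
          intro η' hη'
          have habs : η' + η = η :=
            add_absorp (b := log ω η) (by rw [hηe]; exact hη') ha1
          have h1 : L η α = L η (L η' α) := by
            have := congrFun (hL.1.2.2.2 η' η) α
            rw [habs] at this
            exact this
          have h2 : L η (L η' α) ≤ L η' α := (hL.1.1 η).le_self _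
          have h3 : L η' α ≤ α := (hL.1.1 η').le_self α
          refine le_antisymm h3 ?_
          calc α = L η α := hLα.symm
            _ = L η (L η' α) := h1
            _ ≤ L η' α := h2
        have hCset : α ∈ Cset (log ω η) := by
          intro a ha
          have h1 : ω ^ a < η := by
            rw [← hηe]
            exact (opow_lt_opow_iff_right one_lt_omega0).2 ha
          have h3 : E0 (ω ^ a) α = α := IHη _ h1 (lt_trans h1 hηΞ) α (hfix _ h1)
          rwa [E0_opow] at h3
        obtain ⟨u', hu⟩ := (mem_Cset_iff_range hOk he0).1 hCset
        have hEη : E0 η u' = α := by rw [← hηe, E0_opow]; exact hu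
        have hKη := hK η hηΞ u'
        rw [hEη, hLα] at hKη
        rw [← hηe, E0_opow]
        rw [← hKη] at hu
        exact hu
    · -- decomposable
      have hωlt : ω ^ log ω η < η :=
        lt_of_le_of_ne ha1 fun h' =>
          hr0 (by rw [h']; exact Ordinal.sub_self η)
      have hcomp : L η α = L (η - ω ^ log ω η) (L (ω ^ log ω η) α) := by
        have := congrFun (hL.1.2.2.2 (ω ^ log ω η) (η - ω ^ log ω η)) α
        rw [hra] at this
        exact this
      have h3 : L (ω ^ log ω η) α ≤ α := (hL.1.1 _).le_self α
      have h4 : L (ω ^ log ω η) α = α := by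
        refine le_antisymm h3 ?_
        calc α = L η α := hLα.symm
          _ = L (η - ω ^ log ω η) (L (ω ^ log ω η) α) := hcomp
          _ ≤ L (ω ^ log ω η) α := (hL.1.1 _).le_self _
      have h5 : L (η - ω ^ log ω η) α = α := by
        rw [h4] at hcomp
        rw [← hcomp]
        exact hLα
      have hE1 : E0 (ω ^ log ω η) α = α := IHη _ hωlt (lt_trans hωlt hηΞ) α h4
      have hE2 : E0 (η - ω ^ log ω η) α = α := IHη _ hrlt (lt_trans hrlt hηΞ) α h5
      have : E0 η α = E0 (ω ^ log ω η) (E0 (η - ω ^ log ω η) α) := by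
        conv_lhs => rw [← hra]
        rw [E0_add hOk]
        rfl
      rw [this, hE2, hE1]

/-- descent to the club `Cset γ` -/
theorem Ldesc (hOk : OkP.{u, v}) (hL : IsCohyperation ell0 L) {γ : Ordinal.{v}} (hγ : γ ≠ 0)
    (hK : ∀ η < ω ^ γ, ∀ x, L η (E0 η x) = x) :
    ∀ α, ∃ c, c ≤ α ∧ c ∈ Cset γ ∧ L (ω ^ γ) α = L (ω ^ γ) c := by
  intro α
  induction α using Ordinal.induction with
  | h α IH =>
    by_cases hc : α ∈ Cset γ
    · exact ⟨α, le_rfl, hc, rfl⟩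
    · have h2 : ¬ ∀ a < γ, P a α = α := hc
      push_neg at h2
      obtain ⟨a, ha, hPa⟩ := h2
      have hpow : ω ^ a < ω ^ γ := (opow_lt_opow_iff_right one_lt_omega0).2 ha
      have hEa : E0 (ω ^ a) α ≠ α := by rw [E0_opow]; exact hPa
      have hLa : L (ω ^ a) α ≠ α := fun h => hEa (Slem hOk hL hK _ hpow α h)
      have hLlt : L (ω ^ a) α < α := lt_of_le_of_ne ((hL.1.1 _).le_self α) hLa
      have habs : ω ^ a + ω ^ γ = ω ^ γ := add_absorp hpow le_rfl
      have hcomp : L (ω ^ γ) α = L (ω ^ γ) (L (ω ^ a) α) := by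
        have := congrFun (hL.1.2.2.2 (ω ^ a) (ω ^ γ)) α
        rw [habs] at this
        exact this
      obtain ⟨c, hcle, hcC, hQ⟩ := IH _ hLlt
      exact ⟨c, le_trans hcle hLlt.le, hcC, by rw [hcomp]; exact hQ⟩

/-- upper bound -/
theorem Lupper (hOk : OkP.{u, v}) (hL : IsCohyperation ell0 L) {γ : Ordinal.{v}} (hγ : γ ≠ 0)
    (hK : ∀ η < ω ^ γ, ∀ x, L η (E0 η x) = x) :
    ∀ x, L (ω ^ γ) (P γ x) ≤ x := by
  intro x
  induction x using Ordinal.induction with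
  | h x IH =>
    obtain ⟨g, hg⟩ := hL.1.1 (ω ^ γ) (P γ x + 1)
    have himg : ∀ v, v < g ↔ ∃ y, y ≤ x ∧ L (ω ^ γ) (P γ y) = v := by
      intro v
      constructor
      · intro hv
        have : v ∈ Iio g := hv
        rw [← hg] at this
        obtain ⟨α, hα, rfl⟩ := this
        obtain ⟨c, hcle, hcC, hQ⟩ := Ldesc hOk hL hγ hK α
        obtain ⟨y, hy⟩ := (mem_Cset_iff_range hOk hγ).1 hcC
        have hyx : y ≤ x := by
          rw [← (P_normal hOk γ).strictMono.le_iff_le, hy]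
          exact le_trans hcle (oltsucc_iff.1 hα)
        exact ⟨y, hyx, by rw [hQ, hy]⟩
      · rintro ⟨y, hyx, rfl⟩
        have : L (ω ^ γ) (P γ y) ∈ Iio g := by
          rw [← hg]
          refine ⟨P γ y, ?_, rfl⟩
          rw [mem_Iio, oltsucc_iff]
          exact (P_normal hOk γ).monotone hyx
        exact this
    by_contra hxl
    push_neg at hxl
    have hvg : L (ω ^ γ) (P γ x) < g := (himg _).2 ⟨x, le_rfl, rfl⟩
    have hxg : x < g := lt_trans hxl hvg
    obtain ⟨y, hyx, hyL⟩ := (himg x).1 hxg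
    rcases lt_or_eq_of_le hyx with h' | heq
    · exact absurd hyL (ne_of_lt (lt_of_le_of_lt (IH y h') h'))
    · rw [heq] at hyL
      rw [hyL] at hxl
      exact lt_irrefl x hxl

/-- the key identity: `L ξ` inverts `E0 ξ` -/
theorem Kmain (hOk : OkP.{u, v}) (hL : IsCohyperation ell0 L) :
    ∀ (ξ : Ordinal.{v}) (x : Ordinal.{u}), L ξ (E0 ξ x) = x := by
  intro ξ
  induction ξ using Ordinal.induction with
  | h ξ IH =>
    intro x
    rcases eq_or_ne ξ 0 with rfl | hξ
    · rw [E0_zero, hL.1.2.1]; rfl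
    have ha1 : ω ^ log ω ξ ≤ ξ := opow_log_le_self ω hξ
    have hra : ω ^ log ω ξ + (ξ - ω ^ log ω ξ) = ξ := Ordinal.add_sub_cancel_of_le ha1
    have hrlt : ξ - ω ^ log ω ξ < ξ := sub_opow_log_lt hξ
    rcases eq_or_ne (ξ - ω ^ log ω ξ) 0 with hr0 | hr0
    · -- indecomposable
      have hηe : ω ^ log ω ξ = ξ := by conv_rhs => rw [← hra, hr0, add_zero]
      rcases eq_or_ne (log ω ξ) 0 with he0 | he0
      · -- ξ = 1
        have hξ1 : ξ = 1 := by rw [← hηe, he0, opow_zero]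
        subst hξ1
        rw [E0_one, hL.1.2.2.1]
        exact ell0_gE x
      · have hEP : E0 ξ x = P (log ω ξ) x := by
          rw [E0_pos hξ, hr0, E0_zero]
          rfl
        have hK : ∀ η < ω ^ log ω ξ, ∀ z, L η (E0 η z) = z := by
          intro η hη z
          exact IH η (by rw [hηe] at hη; exact hη) z
        have hupp : L ξ (E0 ξ x) ≤ x := by
          rw [hEP]
          have := Lupper hOk hL he0 hK x
          rw [hηe] at this
          exact this
        have hlow : x ≤ L ξ (E0 ξ x) := by
          have h1 := hL.2 hFam (hFam_weak hOk) ξ (E0 ξ x)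
          have hQf : hFam ξ = Q (log ω ξ) := by
            rw [hFam_pos hξ, hr0, hFam_zero, Function.id_comp]
          have h2 : hFam ξ (E0 ξ x) = x := by
            rw [hEP, hQf]
            exact Q_P hOk he0 x
          rw [h2] at h1
          exact h1
        exact le_antisymm hupp hlow
    · -- decomposable
      have hωlt : ω ^ log ω ξ < ξ :=
        lt_of_le_of_ne ha1 fun h' =>
          hr0 (by rw [h']; exact Ordinal.sub_self ξ)
      have hcomp : L ξ (E0 ξ x) =
          L (ξ - ω ^ log ω ξ) (L (ω ^ log ω ξ) (E0 ξ x)) := by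
        have := congrFun (hL.1.2.2.2 (ω ^ log ω ξ) (ξ - ω ^ log ω ξ)) (E0 ξ x)
        rw [hra] at this
        exact this
      have hEξ : E0 ξ x = E0 (ω ^ log ω ξ) (E0 (ξ - ω ^ log ω ξ) x) := by
        conv_lhs => rw [← hra]
        rw [E0_add hOk]
        rfl
      rw [hcomp, hEξ, IH _ hωlt, IH _ hrlt]

end Lfacts

end

/-- Let `E` be the hyperation of `e` and `L` the cohyperation of the end-logarithm
`ℓ`. Then `L (ω^ρ) (E (ω^β) ξ)` equals `E (ω^β) ξ` if `ω^ρ < ω^β`, equals `ξ` if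
`ω^ρ = ω^β`, and equals `L (ω^ρ) ξ` if `ω^ρ > ω^β`. -/
theorem stmt18 (ell : Ordinal → Ordinal) (hell : IsEndLog ell)
    (E L : Ordinal → Ordinal → Ordinal)
    (hE : IsHyperation eFun E) (hL : IsCohyperation ell L)
    (ρ β ξ : Ordinal) :
    (ω ^ ρ < ω ^ β → L (ω ^ ρ) (E (ω ^ β) ξ) = E (ω ^ β) ξ) ∧
    (ω ^ ρ = ω ^ β → L (ω ^ ρ) (E (ω ^ β) ξ) = ξ) ∧
    (ω ^ β < ω ^ ρ → L (ω ^ ρ) (E (ω ^ β) ξ) = L (ω ^ ρ) ξ) := by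
  have hellq : ell = ell0 := isEndLog_eq_ell0 hell
  rw [hellq] at hL
  have hOk : OkP := fun γ => (okAll hE.1 γ).1
  have hEeq : ∀ a b, E a b = E0 a b := fun a b =>
    le_antisymm (hE.2 E0 (E0_weak hOk) a b) (E0_min hOk hE.1 a b)
  have hK := Kmain hOk hL
  refine ⟨?_, ?_, ?_⟩
  · intro hlt
    rw [hEeq]
    have habs : ω ^ ρ + ω ^ β = ω ^ β := add_absorp hlt le_rfl
    have h1 : E0 (ω ^ β) ξ = E0 (ω ^ ρ) (E0 (ω ^ β) ξ) := by
      conv_lhs => rw [← habs]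
      rw [E0_add hOk]
      rfl
    conv_lhs => rw [h1]
    exact hK (ω ^ ρ) (E0 (ω ^ β) ξ)
  · intro heqp
    rw [heqp, hEeq]
    exact hK (ω ^ β) ξ
  · intro hlt
    rw [hEeq]
    have habs : ω ^ β + ω ^ ρ = ω ^ ρ := add_absorp hlt le_rfl
    have h2 := congrFun (hL.1.2.2.2 (ω ^ β) (ω ^ ρ)) (E0 (ω ^ β) ξ)
    rw [habs] at h2
    rw [h2]
    show L (ω ^ ρ) (L (ω ^ β) (E0 (ω ^ β) ξ)) = L (ω ^ ρ) ξ
    rw [hK (ω ^ β) ξ]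
end
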